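/- arXiv:1901.01469 — 3 statements merged into one kernel-verified Lean document; each statement's English description precedes it below -/
import Mathlib

section
/- Let (x̄,λ̄) be a solution of the variational system Ψ(x,λ) = 0, λ ∈ ∂θ(Φ(x)). Set z̄ := Φ(x̄), let K := T_Y(λ̄) ∩ {z̄ − Bλ̄}^⊥ be the critical cone of Y at λ̄ for z̄ − Bλ̄, and let K* := {v ∈ ℝ^m : ⟨v,w⟩ ≤ 0 for all w ∈ K} be its polar cone. Then λ̄ is a critical Lagrange multiplier corresponding to x̄ if and only if the system ∇_xΨ(x̄,λ̄)ξ + ∇Φ(x̄)*η = 0, ⟨∇Φ(x̄)ξ − Bη, η⟩ = 0, ∇Φ(x̄)ξ − Bη ∈ K*, η ∈ K admits a solution (ξ,η) ∈ ℝ^n × ℝ^m with ξ ≠ 0; accordingly, λ̄ is noncritical if and only if every solution (ξ,η) of this system has ξ = 0. -/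
open Filter Topology Metric Set Pointwise
open scoped RealInnerProductSpace

noncomputable section

/-- Euclidean space ℝ^k. -/
abbrev Evec (k : ℕ) : Type := EuclideanSpace ℝ (Fin k)

/-- The Bouligand tangent cone to `Ω` at `z`: limits of `α_k (z_k - z)` with
`z_k → z` in `Ω` and `α_k ≥ 0`. -/
def bTangentCone {F : Type*} [NormedAddCommGroup F] [NormedSpace ℝ F]
    (Ω : Set F) (z : F) : Set F :=
  {w | ∃ (zs : ℕ → F) (a : ℕ → ℝ), (∀ k, zs k ∈ Ω) ∧ (∀ k, 0 ≤ a k) ∧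
    Tendsto zs atTop (𝓝 z) ∧ Tendsto (fun k => a k • (zs k - z)) atTop (𝓝 w)}

/-- Graph of a set-valued mapping. -/
def svGraph {A B : Type*} (F : A → Set B) : Set (A × B) := {p | p.2 ∈ F p.1}

/-- Graphical derivative of a set-valued mapping at `(z, w)` in direction `u`. -/
def gDeriv {A B : Type*} [NormedAddCommGroup A] [NormedSpace ℝ A]
    [NormedAddCommGroup B] [NormedSpace ℝ B]
    (F : A → Set B) (z : A) (w : B) (u : A) : Set B :=
  {v | (u, v) ∈ bTangentCone (svGraph F) (z, w)}

/-- A convex polyhedral set: a finite intersection of closed half-spaces. -/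
def IsPolyhedral {k : ℕ} (Y : Set (Evec k)) : Prop :=
  ∃ (p : ℕ) (b : Fin p → Evec k) (c : Fin p → ℝ), Y = {y | ∀ i, ⟪b i, y⟫ ≤ c i}

/-- The piecewise linear-quadratic penalty θ_{Y,B}. -/
def thetaY {k : ℕ} (Y : Set (Evec k)) (B : Evec k →L[ℝ] Evec k) (u : Evec k) : EReal :=
  ⨆ y ∈ Y, ((⟪y, u⟫ - (1 / 2) * ⟪y, B y⟫ : ℝ) : EReal)

/-- Subdifferential of convex analysis of an extended-real-valued function. -/
def subdiff {k : ℕ} (θ : Evec k → EReal) (z : Evec k) : Set (Evec k) :=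
  {v | ∀ u, θ z + ((⟪v, u - z⟫ : ℝ) : EReal) ≤ θ u}

/-- Polar cone. -/
def polarCone {k : ℕ} (K : Set (Evec k)) : Set (Evec k) :=
  {v | ∀ w ∈ K, ⟪v, w⟫ ≤ 0}

/-- Normal cone of convex analysis. -/
def convNormalCone {k : ℕ} (Ω : Set (Evec k)) (z : Evec k) : Set (Evec k) :=
  {v | ∀ w ∈ Ω, ⟪v, w - z⟫ ≤ 0}

/-- The critical cone K = T_Y(lmo) ∩ {zo - Blmo}^⊥. -/
def critCone {k : ℕ} (Y : Set (Evec k)) (B : Evec k →L[ℝ] Evec k)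
    (zo lmo : Evec k) : Set (Evec k) :=
  bTangentCone Y lmo ∩ {w | ⟪zo - B lmo, w⟫ = 0}

/-- Calmness of a set-valued mapping at a graph point. -/
def Calm {A B : Type*} [NormedAddCommGroup A] [NormedAddCommGroup B]
    (F : A → Set B) (zo : A) (wo : B) : Prop :=
  ∃ ℓ : ℝ, 0 ≤ ℓ ∧ ∃ U ∈ 𝓝 zo, ∃ V ∈ 𝓝 wo,
    ∀ z ∈ U, ∀ w ∈ F z ∩ V, ∃ w' ∈ F zo, ‖w - w'‖ ≤ ℓ * ‖z - zo‖

/-- Isolated calmness of a set-valued mapping at a graph point. -/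
def IsolCalm {A B : Type*} [NormedAddCommGroup A] [NormedAddCommGroup B]
    (F : A → Set B) (zo : A) (wo : B) : Prop :=
  ∃ ℓ : ℝ, 0 ≤ ℓ ∧ ∃ U ∈ 𝓝 zo, ∃ V ∈ 𝓝 wo,
    ∀ z ∈ U, ∀ w ∈ F z ∩ V, ‖w - wo‖ ≤ ℓ * ‖z - zo‖

/-- Robust isolated calmness of a set-valued mapping at a graph point. -/
def RobIsolCalm {A B : Type*} [NormedAddCommGroup A] [NormedAddCommGroup B]
    (F : A → Set B) (zo : A) (wo : B) : Prop :=
  ∃ ℓ : ℝ, 0 ≤ ℓ ∧ ∃ U ∈ 𝓝 zo, ∃ V ∈ 𝓝 wo,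
    (∀ z ∈ U, ∀ w ∈ F z ∩ V, ‖w - wo‖ ≤ ℓ * ‖z - zo‖) ∧
    ∀ z ∈ U, (F z ∩ V).Nonempty

/-- Lipschitz-like (Aubin) property of a set-valued mapping around a graph point. -/
def LipLike {A B : Type*} [NormedAddCommGroup A] [NormedAddCommGroup B]
    (F : A → Set B) (zo : A) (wo : B) : Prop :=
  ∃ ℓ : ℝ, 0 ≤ ℓ ∧ ∃ U ∈ 𝓝 zo, ∃ V ∈ 𝓝 wo,
    ∀ z ∈ U, ∀ z' ∈ U, ∀ w ∈ F z' ∩ V, ∃ w' ∈ F z, ‖w - w'‖ ≤ ℓ * ‖z' - z‖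

/-! ### The general variational system -/

/-- Ψ(x,λ) = f(x) + ∇Φ(x)*λ. -/
def Psi {n m : ℕ} (f : Evec n → Evec n) (Φ : Evec n → Evec m)
    (x : Evec n) (lam : Evec m) : Evec n :=
  f x + ContinuousLinearMap.adjoint (fderiv ℝ Φ x) lam

/-- Lagrange multipliers Λ(xo) of the variational system. -/
def LagMult {n m : ℕ} (Y : Set (Evec m)) (B : Evec m →L[ℝ] Evec m)
    (f : Evec n → Evec n) (Φ : Evec n → Evec m) (xo : Evec n) : Set (Evec m) :=
  {lam | Psi f Φ xo lam = 0 ∧ lam ∈ subdiff (thetaY Y B) (Φ xo)}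

/-- Solution map of the canonically perturbed variational system. -/
def SolMap {n m : ℕ} (Y : Set (Evec m)) (B : Evec m →L[ℝ] Evec m)
    (f : Evec n → Evec n) (Φ : Evec n → Evec m) :
    Evec n × Evec m → Set (Evec n × Evec m) :=
  fun p => {q | Psi f Φ q.1 q.2 = p.1 ∧ q.2 ∈ subdiff (thetaY Y B) (Φ q.1 + p.2)}

/-- Multiplier map associated with xo. -/
def MultMap {n m : ℕ} (Y : Set (Evec m)) (B : Evec m →L[ℝ] Evec m)
    (f : Evec n → Evec n) (Φ : Evec n → Evec m) (xo : Evec n) :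
    Evec n × Evec m → Set (Evec m) :=
  fun p => {lam | Psi f Φ xo lam = p.1 ∧ lam ∈ subdiff (thetaY Y B) (Φ xo + p.2)}

/-- lmo is a critical Lagrange multiplier for the variational system. -/
def IsCriticalMult {n m : ℕ} (Y : Set (Evec m)) (B : Evec m →L[ℝ] Evec m)
    (f : Evec n → Evec n) (Φ : Evec n → Evec m) (xo : Evec n) (lmo : Evec m) : Prop :=
  ∃ ξ : Evec n, ξ ≠ 0 ∧
    ∃ η ∈ gDeriv (subdiff (thetaY Y B)) (Φ xo) lmo (fderiv ℝ Φ xo ξ),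
      fderiv ℝ (fun x => Psi f Φ x lmo) xo ξ +
        ContinuousLinearMap.adjoint (fderiv ℝ Φ xo) η = 0

/-- lmo is a noncritical Lagrange multiplier for the variational system. -/
def IsNoncriticalMult {n m : ℕ} (Y : Set (Evec m)) (B : Evec m →L[ℝ] Evec m)
    (f : Evec n → Evec n) (Φ : Evec n → Evec m) (xo : Evec n) (lmo : Evec m) : Prop :=
  ∀ ξ : Evec n, ∀ η ∈ gDeriv (subdiff (thetaY Y B)) (Φ xo) lmo (fderiv ℝ Φ xo ξ),
    fderiv ℝ (fun x => Psi f Φ x lmo) xo ξ +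
      ContinuousLinearMap.adjoint (fderiv ℝ Φ xo) η = 0 → ξ = 0

/-- `u` is the proximal point of `θ` at `z`. -/
def IsProxPt {k : ℕ} (θ : Evec k → EReal) (z u : Evec k) : Prop :=
  ∀ w, θ u + ((1 / 2 * ‖z - u‖ ^ 2 : ℝ) : EReal) ≤ θ w + ((1 / 2 * ‖z - w‖ ^ 2 : ℝ) : EReal)

/-! ### ENLP -/

/-- The Lagrangian of the ENLP. -/
def Lag {n m : ℕ} (B : Evec m →L[ℝ] Evec m) (φ₀ : Evec n → ℝ) (Φ : Evec n → Evec m)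
    (x : Evec n) (lam : Evec m) : ℝ :=
  φ₀ x + ⟪Φ x, lam⟫ - (1 / 2) * ⟪lam, B lam⟫

/-- The essential objective φ = φ₀ + θ∘Φ of the ENLP. -/
def enlpPhi {n m : ℕ} (Y : Set (Evec m)) (B : Evec m →L[ℝ] Evec m)
    (φ₀ : Evec n → ℝ) (Φ : Evec n → Evec m) (x : Evec n) : EReal :=
  ((φ₀ x : ℝ) : EReal) + thetaY Y B (Φ x)

/-- Lagrange multipliers of the ENLP KKT system. -/
def LagMultCom {n m : ℕ} (Y : Set (Evec m)) (B : Evec m →L[ℝ] Evec m)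
    (φ₀ : Evec n → ℝ) (Φ : Evec n → Evec m) (xo : Evec n) : Set (Evec m) :=
  {lam | gradient (fun x => Lag B φ₀ Φ x lam) xo = 0 ∧
    lam ∈ subdiff (thetaY Y B) (Φ xo)}

/-- Solution map of the canonically perturbed KKT system of the ENLP. -/
def SKKT {n m : ℕ} (Y : Set (Evec m)) (B : Evec m →L[ℝ] Evec m)
    (φ₀ : Evec n → ℝ) (Φ : Evec n → Evec m) :
    Evec n × Evec m → Set (Evec n × Evec m) :=
  fun p => {q | gradient (fun x => Lag B φ₀ Φ x q.2) q.1 = p.1 ∧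
    q.2 ∈ subdiff (thetaY Y B) (Φ q.1 + p.2)}

/-- The Hessian ∇²_{xx}L(xo,lmo) as a continuous linear map. -/
def hessL {n m : ℕ} (B : Evec m →L[ℝ] Evec m) (φ₀ : Evec n → ℝ) (Φ : Evec n → Evec m)
    (xo : Evec n) (lmo : Evec m) : Evec n →L[ℝ] Evec n :=
  fderiv ℝ (fun x => gradient (fun x' => Lag B φ₀ Φ x' lmo) x) xo

/-- lmo is a noncritical multiplier of the KKT system of the ENLP. -/
def IsNoncriticalENLP {n m : ℕ} (Y : Set (Evec m)) (B : Evec m →L[ℝ] Evec m)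
    (φ₀ : Evec n → ℝ) (Φ : Evec n → Evec m) (xo : Evec n) (lmo : Evec m) : Prop :=
  ∀ ξ : Evec n, ∀ η ∈ gDeriv (subdiff (thetaY Y B)) (Φ xo) lmo (fderiv ℝ Φ xo ξ),
    hessL B φ₀ Φ xo lmo ξ + ContinuousLinearMap.adjoint (fderiv ℝ Φ xo) η = 0 → ξ = 0

/-- The second-order sufficient condition for the ENLP at (xo,lmo). -/
def SOSC {n m : ℕ} (Y : Set (Evec m)) (B : Evec m →L[ℝ] Evec m)
    (φ₀ : Evec n → ℝ) (Φ : Evec n → Evec m) (xo : Evec n) (lmo : Evec m) : Prop :=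
  ∀ w : Evec n, w ≠ 0 →
    fderiv ℝ Φ xo w ∈ polarCone (critCone Y B (Φ xo) lmo) + Set.range (⇑B) →
    0 < ((⟪hessL B φ₀ Φ xo lmo w, w⟫ : ℝ) : EReal) +
      2 * thetaY (critCone Y B (Φ xo) lmo) B (fderiv ℝ Φ xo w)

/-- xo is a local optimal solution of the ENLP. -/
def IsLocalOptENLP {n m : ℕ} (Y : Set (Evec m)) (B : Evec m →L[ℝ] Evec m)
    (φ₀ : Evec n → ℝ) (Φ : Evec n → Evec m) (xo : Evec n) : Prop :=
  ∃ ε > (0 : ℝ), ∀ x ∈ Metric.closedBall xo ε,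
    enlpPhi Y B φ₀ Φ xo ≤ enlpPhi Y B φ₀ Φ x

/-- The second subderivative d²φ(xo,vo)(wo). -/
def secondSubderiv {k : ℕ} (φ : Evec k → EReal) (xo vo wo : Evec k) : EReal :=
  Filter.liminf
    (fun p : ℝ × Evec k =>
      ((2 / p.1 ^ 2 : ℝ) : EReal) *
        (φ (xo + p.1 • p.2) - φ xo - ((p.1 * ⟪vo, p.2⟫ : ℝ) : EReal)))
    ((𝓝[>] (0 : ℝ)) ×ˢ 𝓝 wo)

/-- The perturbed objective of the ENLP. -/
def pObj {n m : ℕ} (Y : Set (Evec m)) (B : Evec m →L[ℝ] Evec m)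
    (φ₀ : Evec n → ℝ) (Φ : Evec n → Evec m) (p : Evec n × Evec m) (x : Evec n) : EReal :=
  ((φ₀ x - ⟪p.1, x⟫ : ℝ) : EReal) + thetaY Y B (Φ x + p.2)

/-- xo is a fully stable local optimal solution of the ENLP. -/
def FullyStable {n m : ℕ} (Y : Set (Evec m)) (B : Evec m →L[ℝ] Evec m)
    (φ₀ : Evec n → ℝ) (Φ : Evec n → Evec m) (xo : Evec n) : Prop :=
  ∃ γ > (0 : ℝ), ∃ U ∈ 𝓝 (0 : Evec n), ∃ W ∈ 𝓝 (0 : Evec m),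
    ∃ (g : Evec n × Evec m → Evec n) (mg : Evec n × Evec m → ℝ) (ℓ : ℝ), 0 ≤ ℓ ∧
      g (0, 0) = xo ∧
      (∀ p ∈ U ×ˢ W,
        {x : Evec n | ‖x - xo‖ ≤ γ ∧ ∀ x', ‖x' - xo‖ ≤ γ →
          pObj Y B φ₀ Φ p x ≤ pObj Y B φ₀ Φ p x'} = {g p}) ∧
      (∀ p ∈ U ×ˢ W, ∀ q ∈ U ×ˢ W, ‖g p - g q‖ ≤ ℓ * ‖p - q‖) ∧
      (∀ p ∈ U ×ˢ W,
        sInf (pObj Y B φ₀ Φ p '' {x | ‖x - xo‖ ≤ γ}) = ((mg p : ℝ) : EReal)) ∧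
      (∀ p ∈ U ×ˢ W, ∀ q ∈ U ×ˢ W, |mg p - mg q| ≤ ℓ * ‖p - q‖)

/-! ### Normal cones and coderivatives on products -/

/-- Regular (Fréchet) normal cone to a subset of ℝ^a × ℝ^b. -/
def regNormalCone2 {a b : ℕ} (Ω : Set (Evec a × Evec b)) (z : Evec a × Evec b) :
    Set (Evec a × Evec b) :=
  {v | ∀ ε > (0 : ℝ), ∃ δ > (0 : ℝ), ∀ w ∈ Ω, ‖w - z‖ < δ →
    ⟪v.1, w.1 - z.1⟫ + ⟪v.2, w.2 - z.2⟫ ≤ ε * ‖w - z‖}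

/-- Limiting (Mordukhovich) normal cone to a subset of ℝ^a × ℝ^b. -/
def limNormalCone2 {a b : ℕ} (Ω : Set (Evec a × Evec b)) (z : Evec a × Evec b) :
    Set (Evec a × Evec b) :=
  {v | ∃ (zs vs : ℕ → Evec a × Evec b), (∀ k, zs k ∈ Ω) ∧
    (∀ k, vs k ∈ regNormalCone2 Ω (zs k)) ∧
    Tendsto zs atTop (𝓝 z) ∧ Tendsto vs atTop (𝓝 v)}

/-- Coderivative of a set-valued mapping between Euclidean spaces. -/
def coDeriv {a b : ℕ} (F : Evec a → Set (Evec b)) (z : Evec a) (w : Evec b)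
    (v : Evec b) : Set (Evec a) :=
  {u | (u, -v) ∈ limNormalCone2 (svGraph F) (z, w)}

end

section CharSubdiff

variable {m : ℕ}

/-- The function being sup'd in `thetaY`. -/
noncomputable def gfun {m : ℕ} (B : Evec m →L[ℝ] Evec m) (y u : Evec m) : ℝ :=
  ⟪y, u⟫ - (1 / 2) * ⟪y, B y⟫

lemma thetaY_eq (Y : Set (Evec m)) (B : Evec m →L[ℝ] Evec m) (u : Evec m) :
    thetaY Y B u = ⨆ y ∈ Y, ((gfun B y u : ℝ) : EReal) := rfl

lemma gfun_diff {B : Evec m →L[ℝ] Evec m} (hBsym : ∀ u v : Evec m, ⟪B u, v⟫ = ⟪u, B v⟫)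
    (y l z : Evec m) :
    gfun B y z - gfun B l z = ⟪z - B l, y - l⟫ - (1 / 2) * ⟪y - l, B (y - l)⟫ := by
  have h1 : ⟪l, B y⟫ = ⟪y, B l⟫ := by rw [← hBsym, real_inner_comm]
  simp only [gfun, inner_sub_left, inner_sub_right, map_sub]
  linarith [h1, real_inner_comm (B l) y, real_inner_comm (B l) l, real_inner_comm z y,
    real_inner_comm z l, real_inner_comm y z, real_inner_comm l z]

lemma isClosed_poly {Y : Set (Evec m)} (h : IsPolyhedral Y) : IsClosed Y := by
  obtain ⟨p, b, c, rfl⟩ := h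
  have : {y : Evec m | ∀ i, ⟪b i, y⟫ ≤ c i} = ⋂ i, {y | ⟪b i, y⟫ ≤ c i} := by
    ext y; simp [Set.mem_iInter]
  rw [this]
  exact isClosed_iInter fun i =>
    isClosed_le (Continuous.inner continuous_const continuous_id) continuous_const

lemma convex_poly {Y : Set (Evec m)} (h : IsPolyhedral Y) : Convex ℝ Y := by
  obtain ⟨p, b, c, rfl⟩ := h
  have : {y : Evec m | ∀ i, ⟪b i, y⟫ ≤ c i} = ⋂ i, {y | ⟪b i, y⟫ ≤ c i} := by
    ext y; simp [Set.mem_iInter]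
  rw [this]
  exact convex_iInter fun i => convex_halfSpace_le
    (by exact ⟨fun a b => inner_add_right _ _ _, fun r a => real_inner_smul_right _ _ _⟩) (c i)

end CharSubdiff
section SubdiffChar

variable {m : ℕ}

lemma le_thetaY {Y : Set (Evec m)} {B : Evec m →L[ℝ] Evec m} {y : Evec m} (hy : y ∈ Y)
    (z : Evec m) : ((gfun B y z : ℝ) : EReal) ≤ thetaY Y B z :=
  le_iSup₂ (f := fun y (_ : y ∈ Y) => ((gfun B y z : ℝ) : EReal)) y hy

lemma thetaY_le_quad (Y : Set (Evec m)) {B : Evec m →L[ℝ] Evec m}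
    (hBsym : ∀ u v : Evec m, ⟪B u, v⟫ = ⟪u, B v⟫) (hBpsd : ∀ u : Evec m, 0 ≤ ⟪u, B u⟫)
    (l : Evec m) : thetaY Y B (B l) ≤ ((1 / 2 * ⟪l, B l⟫ : ℝ) : EReal) := by
  refine iSup₂_le fun y hy => EReal.coe_le_coe_iff.2 ?_
  have h2 := hBpsd (y - l)
  simp only [gfun, inner_sub_left, inner_sub_right, map_sub] at h2 ⊢
  nlinarith [real_inner_comm (B l) y, real_inner_comm (B l) l, hBsym l y, real_inner_comm y (B l)]

lemma subdiff_thetaY_iff {Y : Set (Evec m)} (hYne : Y.Nonempty) (hpoly : IsPolyhedral Y)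
    {B : Evec m →L[ℝ] Evec m} (hBsym : ∀ u v : Evec m, ⟪B u, v⟫ = ⟪u, B v⟫)
    (hBpsd : ∀ u : Evec m, 0 ≤ ⟪u, B u⟫) (z l : Evec m) :
    l ∈ subdiff (thetaY Y B) z ↔ l ∈ Y ∧ ∀ y ∈ Y, ⟪z - B l, y - l⟫ ≤ 0 := by
  constructor
  · intro hsub
    obtain ⟨y0, hy0⟩ := hYne
    have hbot := le_thetaY (B := B) hy0 z
    have hne_bot : thetaY Y B z ≠ ⊥ := fun h => by simp [h] at hbot
    have hne_top : thetaY Y B z ≠ ⊤ := by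
      intro htop
      have h1 := hsub (B l)
      rw [htop, EReal.top_add_coe, top_le_iff] at h1
      have h2 := thetaY_le_quad Y hBsym hBpsd l
      rw [h1, top_le_iff] at h2
      exact EReal.coe_ne_top _ h2
    set t := (thetaY Y B z).toReal with hts0
    have hts : thetaY Y B z = (t : EReal) := (EReal.coe_toReal hne_top hne_bot).symm
    have hgle : ∀ y ∈ Y, gfun B y z ≤ t := fun y hy =>
      EReal.coe_le_coe_iff.1 (hts ▸ le_thetaY hy z)
    -- Step: l ∈ Y
    have hlY : l ∈ Y := by
      by_contra hlY
      obtain ⟨f, u, hfa, hfl⟩ :=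
        geometric_hahn_banach_closed_point (convex_poly hpoly) (isClosed_poly hpoly) hlY
      set d := (InnerProductSpace.toDual ℝ (Evec m)).symm f with hd
      have hdip : ∀ x : Evec m, ⟪d, x⟫ = f x := fun x => InnerProductSpace.toDual_symm_apply
      have hθ : thetaY Y B (z + d) ≤ ((t + u : ℝ) : EReal) := by
        refine iSup₂_le fun y hy => EReal.coe_le_coe_iff.2 ?_
        show gfun B y (z + d) ≤ t + u
        have h1 : gfun B y (z + d) = gfun B y z + ⟪d, y⟫ := by
          simp [gfun, inner_add_right, real_inner_comm y d]; ring
        have h3 : ⟪d, y⟫ < u := by rw [hdip y]; exact hfa y hy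
        have := hgle y hy
        rw [h1]; linarith
      have h4 := (hsub (z + d)).trans hθ
      rw [hts, add_sub_cancel_left, ← EReal.coe_add, EReal.coe_le_coe_iff] at h4
      have h5 : ⟪l, d⟫ = f l := by rw [real_inner_comm]; exact hdip l
      rw [h5] at h4
      linarith
    -- Step: t ≤ gfun B l z
    have ht4 : t ≤ gfun B l z := by
      have h5 := (hsub (B l)).trans (thetaY_le_quad Y hBsym hBpsd l)
      rw [hts, ← EReal.coe_add, EReal.coe_le_coe_iff] at h5
      simp only [gfun, inner_sub_right] at h5 ⊢
      linarith
    refine ⟨hlY, fun y hy => ?_⟩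
    by_contra hc
    push_neg at hc
    set c := ⟪z - B l, y - l⟫ with hcc
    set Q := ⟪y - l, B (y - l)⟫ with hQQ
    have hQ0 : 0 ≤ Q := hBpsd _
    have key : ∀ s : ℝ, 0 < s → s ≤ 1 → s * c - s ^ 2 / 2 * Q ≤ 0 := by
      intro s hs hs1
      have hys : l + s • (y - l) ∈ Y := by
        have h6 := convex_poly hpoly hlY hy (by linarith : (0:ℝ) ≤ 1 - s) hs.le (by ring)
        convert h6 using 1
        module
      have hle : gfun B (l + s • (y - l)) z ≤ gfun B l z := (hgle _ hys).trans ht4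
      have hdiff := gfun_diff hBsym (l + s • (y - l)) l z
      rw [add_sub_cancel_left] at hdiff
      rw [real_inner_smul_right, map_smul, real_inner_smul_left, real_inner_smul_right,
        ← hcc, ← hQQ] at hdiff
      nlinarith [hdiff, hle]
    set s0 := min 1 (c / (Q + 1)) with hs0def
    have hQ1 : (0:ℝ) < Q + 1 := by linarith
    have hs0 : 0 < s0 := lt_min one_pos (div_pos hc hQ1)
    have h7 : s0 * (Q + 1) ≤ c := (le_div_iff₀ hQ1).1 (min_le_right _ _)
    have k := key s0 hs0 (min_le_left _ _)
    nlinarith [k, h7, hs0, hQ0, hc, mul_pos hs0 hc]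
  · rintro ⟨hl, hN⟩ u
    have hsup : thetaY Y B z = ((gfun B l z : ℝ) : EReal) := by
      refine le_antisymm (iSup₂_le fun y hy => EReal.coe_le_coe_iff.2 ?_) (le_thetaY hl z)
      show gfun B y z ≤ gfun B l z
      have hd := gfun_diff hBsym y l z
      have h2 := hBpsd (y - l)
      have h3 := hN y hy
      linarith
    rw [hsup, ← EReal.coe_add]
    have heq : gfun B l z + ⟪l, u - z⟫ = gfun B l u := by
      simp only [gfun, inner_sub_right]; ring
    rw [heq]
    exact le_thetaY hl u

end SubdiffChar
section PolyTangent

variable {m : ℕ}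

lemma bTangentCone_active {p : ℕ} {b : Fin p → Evec m} {c : Fin p → ℝ}
    {l d : Evec m} (hd : d ∈ bTangentCone {y : Evec m | ∀ i, ⟪b i, y⟫ ≤ c i} l)
    {i : Fin p} (hi : ⟪b i, l⟫ = c i) : ⟪b i, d⟫ ≤ 0 := by
  obtain ⟨zs, a, hzs, ha, hz, hconv⟩ := hd
  have hcont : Tendsto (fun k => ⟪b i, a k • (zs k - l)⟫) atTop (𝓝 ⟪b i, d⟫) :=
    Filter.Tendsto.inner tendsto_const_nhds hconv
  refine le_of_tendsto hcont (Eventually.of_forall fun k => ?_)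
  rw [real_inner_smul_right, inner_sub_right, hi]
  exact mul_nonpos_of_nonneg_of_nonpos (ha k) (by linarith [hzs k i])

lemma exists_eps_mem {p : ℕ} {b : Fin p → Evec m} {c : Fin p → ℝ} {l d : Evec m}
    (hl : ∀ i, ⟪b i, l⟫ ≤ c i) (hd : ∀ i, ⟪b i, l⟫ = c i → ⟪b i, d⟫ ≤ 0) :
    ∃ ε > (0:ℝ), ∀ s : ℝ, 0 ≤ s → s ≤ ε → (∀ i, ⟪b i, l + s • d⟫ ≤ c i) := by
  have h : ∀ i : Fin p, ∃ εi > (0:ℝ), ∀ s : ℝ, 0 ≤ s → s ≤ εi →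
      ⟪b i, l⟫ + s * ⟪b i, d⟫ ≤ c i := by
    intro i
    by_cases hact : ⟪b i, l⟫ = c i
    · exact ⟨1, one_pos, fun s hs0 hs1 => by nlinarith [hd i hact]⟩
    · have hlt : ⟪b i, l⟫ < c i := lt_of_le_of_ne (hl i) hact
      refine ⟨(c i - ⟪b i, l⟫) / (|⟪b i, d⟫| + 1), div_pos (by linarith) (by positivity), fun s hs0 hs1 => ?_⟩
      have h1 : s * ⟪b i, d⟫ ≤ s * |⟪b i, d⟫| := by nlinarith [le_abs_self ⟪b i, d⟫]
      have h2 : s * (|⟪b i, d⟫| + 1) ≤ c i - ⟪b i, l⟫ := by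
        rw [← le_div_iff₀ (by positivity)]; exact hs1
      nlinarith [abs_nonneg ⟪b i, d⟫]
  choose εi hεi hprop using h
  by_cases hp : Nonempty (Fin p)
  · obtain ⟨i0, -, hmin⟩ := Finset.exists_min_image Finset.univ εi ⟨hp.some, Finset.mem_univ _⟩
    refine ⟨εi i0, hεi i0, fun s hs0 hs1 i => ?_⟩
    rw [inner_add_right, real_inner_smul_right]
    exact hprop i s hs0 (hs1.trans (hmin i (Finset.mem_univ i)))
  · exact ⟨1, one_pos, fun s _ _ i => absurd ⟨i⟩ hp⟩

lemma mem_bTangentCone_of_eps {Y : Set (Evec m)} {l d : Evec m} {ε : ℝ} (hε : 0 < ε)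
    (h : ∀ s : ℝ, 0 ≤ s → s ≤ ε → l + s • d ∈ Y) : d ∈ bTangentCone Y l := by
  refine ⟨fun k => l + (ε / (k + 1)) • d, fun k => (k + 1) / ε,
    fun k => h _ (div_nonneg hε.le (by positivity)) ?_,
    fun k => div_nonneg (by positivity) hε.le, ?_, ?_⟩
  · rw [div_le_iff₀ (by positivity)]; nlinarith
  · have h1 : Tendsto (fun k : ℕ => ε / (k + 1 : ℝ)) atTop (𝓝 0) := by
      have := tendsto_one_div_add_atTop_nhds_zero_nat (𝕜 := ℝ)
      have h2 := this.const_mul ε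
      simpa [div_eq_mul_inv, mul_comm] using h2
    have h3 := h1.smul_const d
    rw [zero_smul] at h3
    have h4 := h3.const_add l
    simpa using h4
  · have heq : ∀ k : ℕ, ((k + 1 : ℝ) / ε) • ((l + (ε / (k + 1)) • d) - l) = d := by
      intro k
      rw [add_sub_cancel_left, smul_smul, div_mul_div_comm, mul_comm,
        div_self (ne_of_gt (mul_pos hε (by positivity))), one_smul]
    simp only [heq]
    exact tendsto_const_nhds

lemma mem_bTangentCone_poly_iff {p : ℕ} {b : Fin p → Evec m} {c : Fin p → ℝ} {l : Evec m}
    (hl : ∀ i, ⟪b i, l⟫ ≤ c i) (d : Evec m) :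
    d ∈ bTangentCone {y : Evec m | ∀ i, ⟪b i, y⟫ ≤ c i} l ↔
      ∀ i, ⟪b i, l⟫ = c i → ⟪b i, d⟫ ≤ 0 := by
  constructor
  · exact fun hd i hi => bTangentCone_active hd hi
  · intro hd
    obtain ⟨ε, hε, hmem⟩ := exists_eps_mem hl hd
    exact mem_bTangentCone_of_eps hε fun s hs0 hs1 => hmem s hs0 hs1

end PolyTangent
section Farkas

variable {m : ℕ} {ι : Type*} [Fintype ι] [DecidableEq ι]

/-- Carathéodory for conic combinations: reduce to a linearly independent subfamily. -/
lemma cone_caratheodory (g : ι → Evec m) (s : Finset ι) :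
    ∀ μ : ι → ℝ, (∀ i, 0 ≤ μ i) →
    ∃ (t : Finset ι) (ν : ι → ℝ), t ⊆ s ∧
      LinearIndependent ℝ (fun i : t => g i) ∧ (∀ i, 0 ≤ ν i) ∧
      ∑ i ∈ t, ν i • g i = ∑ i ∈ s, μ i • g i := by
  induction s using Finset.strongInductionOn with
  | _ s ih =>
    intro μ hμ
    by_cases hind : LinearIndependent ℝ (fun i : s => g i)
    · exact ⟨s, μ, Finset.Subset.refl s, hind, hμ, rfl⟩
    · obtain ⟨cc, hsum, j0, hj0⟩ := Fintype.not_linearIndependent_iff.1 hind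
      -- extend cc to ι
      set c' : ι → ℝ := fun i => if h : i ∈ s then cc ⟨i, h⟩ else 0 with hc'
      have hc'sum : ∑ i ∈ s, c' i • g i = 0 := by
        rw [← Finset.sum_attach s (fun i => c' i • g i)]
        simpa [hc'] using hsum
      have hc'ne : ∃ i ∈ s, c' i ≠ 0 := ⟨j0, j0.2, by simp [hc', j0.2]; exact hj0⟩
      -- wlog some positive coefficient
      have main : ∀ c : ι → ℝ, (∑ i ∈ s, c i • g i = 0) → (∃ i ∈ s, 0 < c i) →
          ∃ (t : Finset ι) (ν : ι → ℝ), t ⊆ s ∧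
            LinearIndependent ℝ (fun i : t => g i) ∧ (∀ i, 0 ≤ ν i) ∧
            ∑ i ∈ t, ν i • g i = ∑ i ∈ s, μ i • g i := by
        intro c hcsum ⟨jp, hjps, hjp⟩
        -- minimize μ i / c i over positive c i
        have hPne : (s.filter (fun i => 0 < c i)).Nonempty :=
          ⟨jp, Finset.mem_filter.2 ⟨hjps, hjp⟩⟩
        obtain ⟨i0, hi0mem, hi0min⟩ :=
          Finset.exists_min_image (s.filter (fun i => 0 < c i)) (fun i => μ i / c i) hPne
        obtain ⟨hi0s, hi0pos⟩ := Finset.mem_filter.1 hi0mem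
        set r := μ i0 / c i0 with hr
        have hr0 : 0 ≤ r := div_nonneg (hμ i0) hi0pos.le
        set ν : ι → ℝ := fun i => if i ∈ s then μ i - r * c i else μ i with hν
        have hν0 : ∀ i, 0 ≤ ν i := by
          intro i
          by_cases his : i ∈ s
          · simp only [hν, if_pos his]
            rcases lt_or_ge 0 (c i) with hci | hci
            · have := hi0min i (Finset.mem_filter.2 ⟨his, hci⟩)
              rw [hr, div_le_div_iff₀ hi0pos hci] at this
              have h2 : r * c i ≤ μ i := by
                rw [hr, div_mul_eq_mul_div, div_le_iff₀ hi0pos]; linarith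
              linarith
            · nlinarith [hμ i, hr0]
          · simp only [hν, if_neg his]; exact hμ i
        have hνi0 : ν i0 = 0 := by
          simp only [hν, if_pos hi0s, hr]
          field_simp
          ring
        have hsum2 : ∑ i ∈ s.erase i0, ν i • g i = ∑ i ∈ s, μ i • g i := by
          have h1 : ∑ i ∈ s, ν i • g i = ∑ i ∈ s, μ i • g i := by
            have : ∀ i ∈ s, ν i • g i = μ i • g i - (r * c i) • g i := by
              intro i his; simp only [hν, if_pos his, sub_smul]
            rw [Finset.sum_congr rfl this, Finset.sum_sub_distrib]
            have : ∑ i ∈ s, (r * c i) • g i = r • ∑ i ∈ s, c i • g i := by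
              rw [Finset.smul_sum]; exact Finset.sum_congr rfl fun i _ => by
                rw [smul_smul]
            rw [this, hcsum, smul_zero, sub_zero]
          rw [← h1]
          exact Finset.sum_erase s (by rw [hνi0, zero_smul])

        obtain ⟨t, ν', ht, hind', hν', heq⟩ := ih (s.erase i0) (Finset.erase_ssubset hi0s) ν hν0
        exact ⟨t, ν', ht.trans (Finset.erase_subset _ _), hind', hν', by rw [heq, hsum2]⟩
      rcases hc'ne with ⟨j1, hj1s, hj1⟩
      rcases lt_or_ge 0 (c' j1) with h | h
      · exact main c' hc'sum ⟨j1, hj1s, h⟩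
      · have hpos : 0 < -c' j1 := by
          rcases lt_or_eq_of_le h with h2 | h2
          · linarith
          · exact absurd h2 hj1
        refine main (fun i => -c' i) ?_ ⟨j1, hj1s, hpos⟩
        have : ∑ i ∈ s, (-c' i) • g i = -∑ i ∈ s, c' i • g i := by
          rw [← Finset.sum_neg_distrib]
          exact Finset.sum_congr rfl fun i _ => by rw [neg_smul]
        rw [this, hc'sum, neg_zero]

end Farkas
section Farkas2

variable {m : ℕ} {ι : Type*} [Fintype ι] [DecidableEq ι]

lemma cone_isClosed (g : ι → Evec m) :
    IsClosed {v : Evec m | ∃ μ : ι → ℝ, (∀ i, 0 ≤ μ i) ∧ v = ∑ i, μ i • g i} := by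
  classical
  have key : ∀ (t : Finset ι) (ν : ι → ℝ),
      ∑ i ∈ t, ν i • g i = ∑ i : t, ν i.1 • g i.1 :=
    fun t ν => (Finset.sum_attach t _).symm
  have hrepr : {v : Evec m | ∃ μ : ι → ℝ, (∀ i, 0 ≤ μ i) ∧ v = ∑ i, μ i • g i} =
      ⋃ (t : Finset ι) (_ : LinearIndependent ℝ (fun i : t => g i)),
        (fun ν : t → ℝ => ∑ i, ν i • g i.1) '' {ν | ∀ i, 0 ≤ ν i} := by
    ext v
    simp only [Set.mem_setOf_eq, Set.mem_iUnion, Set.mem_image]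
    constructor
    · rintro ⟨μ, hμ, rfl⟩
      obtain ⟨t, ν, -, hind, hν, heq⟩ := cone_caratheodory g Finset.univ μ hμ
      refine ⟨t, hind, fun i => ν i.1, fun i => hν i.1, ?_⟩
      rw [← key t ν, heq]
    · rintro ⟨t, hind, ν, hν, rfl⟩
      refine ⟨fun i => if h : i ∈ t then ν ⟨i, h⟩ else 0, fun i => ?_, ?_⟩
      · by_cases h : i ∈ t <;> simp [h]
        exact hν _
      · rw [← Finset.sum_subset (Finset.subset_univ t)
          (fun i _ hi => by simp [hi]), key]
        exact (Finset.sum_congr rfl fun i _ => by rw [dif_pos i.2]).symm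
  rw [hrepr]
  refine isClosed_iUnion_of_finite fun t => isClosed_iUnion_of_finite fun hind => ?_
  have hker : LinearMap.ker (Fintype.linearCombination ℝ (fun i : t => g i.1)) = ⊥ := by
    rw [LinearMap.ker_eq_bot']
    intro ν hν
    have := Fintype.linearIndependent_iff.1 hind ν
      (by rwa [Fintype.linearCombination_apply] at hν)
    funext i; exact this i
  have hce := LinearMap.isClosedEmbedding_of_injective hker
  have himg : (fun ν : t → ℝ => ∑ i, ν i • g i.1) '' {ν | ∀ i, 0 ≤ ν i} =
      (Fintype.linearCombination ℝ (fun i : t => g i.1)) '' {ν | ∀ i, 0 ≤ ν i} := by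
    apply Set.image_congr
    intro ν _
    rw [Fintype.linearCombination_apply]
  rw [himg]
  refine hce.isClosedMap _ ?_
  have : {ν : t → ℝ | ∀ i, 0 ≤ ν i} = ⋂ i, {ν : t → ℝ | 0 ≤ ν i} := by
    ext ν; simp [Set.mem_iInter]
  rw [this]
  exact isClosed_iInter fun i => isClosed_le continuous_const (continuous_apply i)

lemma farkas (g : ι → Evec m) (v : Evec m)
    (h : ∀ d : Evec m, (∀ i, ⟪g i, d⟫ ≤ 0) → ⟪v, d⟫ ≤ 0) :
    ∃ μ : ι → ℝ, (∀ i, 0 ≤ μ i) ∧ v = ∑ i, μ i • g i := by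
  classical
  by_contra hv
  set C := {v : Evec m | ∃ μ : ι → ℝ, (∀ i, 0 ≤ μ i) ∧ v = ∑ i, μ i • g i} with hC
  have hvC : v ∉ C := hv
  have hconv : Convex ℝ C := by
    rintro x ⟨μ, hμ, rfl⟩ y ⟨ν, hν, rfl⟩ a bb ha hb hab
    refine ⟨fun i => a * μ i + bb * ν i,
      fun i => add_nonneg (mul_nonneg ha (hμ i)) (mul_nonneg hb (hν i)), ?_⟩
    rw [Finset.smul_sum, Finset.smul_sum, ← Finset.sum_add_distrib]
    exact (Finset.sum_congr rfl fun i _ => by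
      rw [add_smul, smul_smul, smul_smul]).symm
  obtain ⟨f, u, hfa, hfv⟩ :=
    geometric_hahn_banach_closed_point hconv (cone_isClosed g) hvC
  have h0C : (0 : Evec m) ∈ C := ⟨0, fun i => le_refl 0, by simp⟩
  have hu0 : 0 < u := by have := hfa 0 h0C; simpa using this
  have hgC : ∀ i (s : ℝ), 0 ≤ s → s • g i ∈ C := by
    intro i s hs
    refine ⟨fun j => if j = i then s else 0, fun j => by by_cases hj : j = i <;> simp [hj, hs], ?_⟩
    simp [ite_smul]
  have hfg : ∀ i, f (g i) ≤ 0 := by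
    intro i
    by_contra hpos
    push_neg at hpos
    have hs := hfa (((u + 1) / f (g i)) • g i) (hgC i _ (by positivity))
    rw [map_smul] at hs
    simp only [smul_eq_mul] at hs
    rw [div_mul_cancel₀ _ (ne_of_gt hpos)] at hs
    linarith
  set d := (InnerProductSpace.toDual ℝ (Evec m)).symm f with hd
  have hdip : ∀ x : Evec m, ⟪d, x⟫ = f x := fun x => InnerProductSpace.toDual_symm_apply
  have h1 : ∀ i, ⟪g i, d⟫ ≤ 0 := fun i => by
    rw [real_inner_comm, hdip]; exact hfg i
  have h2 := h d h1
  rw [real_inner_comm, hdip] at h2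
  linarith

end Farkas2
section GDeriv

variable {m : ℕ}

lemma gDeriv_subdiff_forward {Y : Set (Evec m)} (hYne : Y.Nonempty) (hpoly : IsPolyhedral Y)
    {B : Evec m →L[ℝ] Evec m} (hBsym : ∀ u v : Evec m, ⟪B u, v⟫ = ⟪u, B v⟫)
    (hBpsd : ∀ u : Evec m, 0 ≤ ⟪u, B u⟫) {z l : Evec m}
    (hl : l ∈ subdiff (thetaY Y B) z) (u η : Evec m)
    (hmem : η ∈ gDeriv (subdiff (thetaY Y B)) z l u) :
    η ∈ critCone Y B z l ∧ u - B η ∈ polarCone (critCone Y B z l) ∧ ⟪u - B η, η⟫ = 0 := by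
  obtain ⟨hlY, hN⟩ := (subdiff_thetaY_iff hYne hpoly hBsym hBpsd z l).1 hl
  obtain ⟨zs, a, hzs, ha, hz, hconv⟩ := hmem
  have hz1 : Tendsto (fun k => (zs k).1) atTop (𝓝 z) := (continuous_fst.tendsto _).comp hz
  have hz2 : Tendsto (fun k => (zs k).2) atTop (𝓝 l) := (continuous_snd.tendsto _).comp hz
  have hc1 : Tendsto (fun k => a k • ((zs k).1 - z)) atTop (𝓝 u) :=
    (continuous_fst.tendsto _).comp hconv
  have hc2 : Tendsto (fun k => a k • ((zs k).2 - l)) atTop (𝓝 η) :=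
    (continuous_snd.tendsto _).comp hconv
  have hYk : ∀ k, (zs k).2 ∈ Y ∧ ∀ y ∈ Y, ⟪(zs k).1 - B ((zs k).2), y - (zs k).2⟫ ≤ 0 :=
    fun k => (subdiff_thetaY_iff hYne hpoly hBsym hBpsd _ _).1 (hzs k)
  set vb := z - B l with hvb
  set vk : ℕ → Evec m := fun k => (zs k).1 - B ((zs k).2) with hvkdef
  -- nonnegativity of ⟪vk k, λk - l⟫
  have hvknn : ∀ k, 0 ≤ ⟪vk k, (zs k).2 - l⟫ := by
    intro k
    have h1 := (hYk k).2 l hlY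
    rw [show l - (zs k).2 = -((zs k).2 - l) by abel, inner_neg_right] at h1
    linarith
  -- η is in the tangent cone
  have hTη : η ∈ bTangentCone Y l := ⟨fun k => (zs k).2, a, fun k => (hYk k).1, ha, hz2, hc2⟩
  -- limit of ⟪vk, a k • (λk - l)⟫
  have hvblim : Tendsto (fun k => ⟪vk k, a k • ((zs k).2 - l)⟫) atTop (𝓝 ⟪vb, η⟫) :=
    Tendsto.inner (hz1.sub ((B.continuous.tendsto l).comp hz2)) hc2
  -- perpendicularity ⟪vb, η⟫ = 0
  have hperp_le : ⟪vb, η⟫ ≤ 0 := by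
    refine le_of_tendsto (Tendsto.inner tendsto_const_nhds hc2) (Eventually.of_forall fun k => ?_)
    rw [real_inner_smul_right]
    exact mul_nonpos_of_nonneg_of_nonpos (ha k) (hN _ (hYk k).1)
  have hperp : ⟪vb, η⟫ = 0 := by
    refine le_antisymm hperp_le (ge_of_tendsto hvblim (Eventually.of_forall fun k => ?_))
    rw [real_inner_smul_right]
    exact mul_nonneg (ha k) (hvknn k)
  have hηK : η ∈ critCone Y B z l := ⟨hTη, hperp⟩
  -- limit of wk
  have hwk : Tendsto (fun k => a k • (vk k - vb)) atTop (𝓝 (u - B η)) := by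
    refine Tendsto.congr (fun k => ?_) (hc1.sub ((B.continuous.tendsto η).comp hc2))
    show a k • ((zs k).1 - z) - B (a k • ((zs k).2 - l)) = a k • (vk k - vb)
    simp only [hvkdef, hvb, map_smul, map_sub, smul_sub]
    abel
  -- the key polar inequality
  have hKper : ∀ ζ ∈ critCone Y B z l, ⟪u - B η, ζ⟫ ≤ 0 := by
    rintro ζ ⟨hζT, hζperp⟩
    have hζperp' : ⟪vb, ζ⟫ = 0 := hζperp
    obtain ⟨p, b, c, hYrep⟩ := hpoly
    have hlY' : ∀ i, ⟪b i, l⟫ ≤ c i := by rw [hYrep] at hlY; exact hlY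
    have hζact : ∀ i, ⟪b i, l⟫ = c i → ⟪b i, ζ⟫ ≤ 0 := by
      rw [hYrep] at hζT
      exact fun i hi => bTangentCone_active hζT hi
    obtain ⟨ε, hε, hfeas⟩ := exists_eps_mem hlY' hζact
    have hyε : l + ε • ζ ∈ Y := by rw [hYrep]; exact hfeas ε hε.le le_rfl
    have key : ∀ k, ε * ⟪a k • (vk k - vb), ζ⟫ ≤ ⟪vk k, a k • ((zs k).2 - l)⟫ := by
      intro k
      have base := (hYk k).2 _ hyε
      have e1 : ⟪a k • (vk k - vb), ζ⟫ = a k * (⟪vk k, ζ⟫ - ⟪vb, ζ⟫) := by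
        rw [real_inner_smul_left, inner_sub_left]
      have e2 : ⟪vk k, a k • ((zs k).2 - l)⟫ = a k * (⟪vk k, (zs k).2⟫ - ⟪vk k, l⟫) := by
        rw [real_inner_smul_right, inner_sub_right]
      have e3 : ⟪vk k, l + ε • ζ - (zs k).2⟫ =
          ⟪vk k, l⟫ + ε * ⟪vk k, ζ⟫ - ⟪vk k, (zs k).2⟫ := by
        rw [inner_sub_right, inner_add_right, real_inner_smul_right]
      rw [e3] at base
      rw [e1, e2, hζperp', sub_zero]
      nlinarith [ha k]
    have hlim1 : Tendsto (fun k => ε * ⟪a k • (vk k - vb), ζ⟫) atTop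
        (𝓝 (ε * ⟪u - B η, ζ⟫)) := (Tendsto.inner hwk tendsto_const_nhds).const_mul ε
    have hlim2 := hvblim
    rw [hperp] at hlim2
    have := le_of_tendsto_of_tendsto' hlim1 hlim2 key
    nlinarith [hε, this]
  refine ⟨hηK, fun ζ hζ => hKper ζ hζ, le_antisymm (hKper η hηK) ?_⟩
  refine ge_of_tendsto (Tendsto.inner hwk hc2) (Eventually.of_forall fun k => ?_)
  have e4 : ⟪a k • (vk k - vb), a k • ((zs k).2 - l)⟫ =
      a k * (a k * (⟪vk k, (zs k).2 - l⟫ - ⟪vb, (zs k).2 - l⟫)) := by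
    rw [real_inner_smul_left, real_inner_smul_right, inner_sub_left]
  rw [e4]
  have h5 := hvknn k
  have h6 := hN _ (hYk k).1
  have h7 : ⟪vb, (zs k).2 - l⟫ ≤ 0 := h6
  rw [← mul_assoc]
  exact mul_nonneg (mul_nonneg (ha k) (ha k)) (by linarith)

end GDeriv
section GDerivBack
set_option maxHeartbeats 1000000

variable {m : ℕ}

lemma gDeriv_subdiff_backward {Y : Set (Evec m)} (hYne : Y.Nonempty) (hpoly : IsPolyhedral Y)
    {B : Evec m →L[ℝ] Evec m} (hBsym : ∀ u v : Evec m, ⟪B u, v⟫ = ⟪u, B v⟫)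
    (hBpsd : ∀ u : Evec m, 0 ≤ ⟪u, B u⟫) {z l : Evec m}
    (hl : l ∈ subdiff (thetaY Y B) z) (u η : Evec m)
    (hηK : η ∈ critCone Y B z l) (hwP : u - B η ∈ polarCone (critCone Y B z l))
    (hwη : ⟪u - B η, η⟫ = 0) : η ∈ gDeriv (subdiff (thetaY Y B)) z l u := by
  classical
  obtain ⟨hlY, hN⟩ := (subdiff_thetaY_iff hYne hpoly hBsym hBpsd z l).1 hl
  obtain ⟨hηT, hηperp⟩ := hηK
  have hηperp' : ⟪z - B l, η⟫ = 0 := hηperp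
  obtain ⟨p, b, c, hYrep⟩ := hpoly
  have hlY' : ∀ i, ⟪b i, l⟫ ≤ c i := by rw [hYrep] at hlY; exact hlY
  set w := u - B η with hw
  set g : Fin p ⊕ Fin 2 → Evec m :=
    Sum.elim (fun i => if ⟪b i, l⟫ = c i then b i else 0)
      ![z - B l, -(z - B l)] with hg
  have hdual : ∀ d : Evec m, (∀ j, ⟪g j, d⟫ ≤ 0) → d ∈ critCone Y B z l := by
    intro d hj
    have hact : ∀ i, ⟪b i, l⟫ = c i → ⟪b i, d⟫ ≤ 0 := by
      intro i hi
      have h1 := hj (Sum.inl i)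
      rw [hg] at h1
      simp only [Sum.elim_inl, if_pos hi] at h1
      exact h1
    refine ⟨?_, ?_⟩
    · rw [hYrep]
      exact (mem_bTangentCone_poly_iff hlY' d).2 hact
    · have h0 := hj (Sum.inr 0)
      have h1 := hj (Sum.inr 1)
      rw [hg] at h0 h1
      simp only [Sum.elim_inr, Matrix.cons_val_zero] at h0
      simp only [Sum.elim_inr, Matrix.cons_val_one, Matrix.head_cons, Matrix.cons_val_zero] at h1
      rw [inner_neg_left] at h1
      show ⟪z - B l, d⟫ = 0
      linarith
  obtain ⟨μ, hμ, hwsum⟩ := farkas g w (fun d hd => hwP d (hdual d hd))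
  set sc := μ (Sum.inr 0) - μ (Sum.inr 1) with hsc
  set pv := w - sc • (z - B l) with hpv
  have hpvsum : pv = ∑ i : Fin p, μ (Sum.inl i) • g (Sum.inl i) := by
    rw [hpv, hwsum, Fintype.sum_sum_type, Fin.sum_univ_two, hsc]
    have e0 : g (Sum.inr 0) = z - B l := by
      rw [hg]; simp only [Sum.elim_inr, Matrix.cons_val_zero]
    have e1 : g (Sum.inr 1) = -(z - B l) := by
      rw [hg]; simp only [Sum.elim_inr, Matrix.cons_val_one, Matrix.head_cons, Matrix.cons_val_zero]
    rw [e0, e1]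
    module
  have hpvle : ∀ d : Evec m, (∀ i, ⟪b i, l⟫ = c i → ⟪b i, d⟫ ≤ 0) → ⟪pv, d⟫ ≤ 0 := by
    intro d hd
    rw [hpvsum, sum_inner]
    refine Finset.sum_nonpos fun i _ => ?_
    rw [real_inner_smul_left]
    refine mul_nonpos_of_nonneg_of_nonpos (hμ _) ?_
    by_cases hi : ⟪b i, l⟫ = c i
    · rw [hg]; simp only [Sum.elim_inl, if_pos hi]; exact hd i hi
    · rw [hg]; simp only [Sum.elim_inl, if_neg hi, inner_zero_left]; exact le_refl 0
  have hηact : ∀ i, ⟪b i, l⟫ = c i → ⟪b i, η⟫ ≤ 0 := by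
    rw [hYrep] at hηT
    exact fun i hi => bTangentCone_active hηT hi
  obtain ⟨ε, hε, hfeas⟩ := exists_eps_mem hlY' hηact
  set t0 := min ε (1 / (|sc| + 1)) with ht0
  have ht0pos : 0 < t0 := lt_min hε (by positivity)
  have hgraph : ∀ t : ℝ, 0 < t → t ≤ t0 →
      (l + t • η) ∈ subdiff (thetaY Y B) (z + t • u) := by
    intro t ht ht1
    refine (subdiff_thetaY_iff hYne ⟨p, b, c, hYrep⟩ hBsym hBpsd _ _).2 ⟨?_, ?_⟩
    · rw [hYrep]
      exact hfeas t ht.le (ht1.trans (min_le_left _ _))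
    · intro y hy
      have hvt : z + t • u - B (l + t • η) = (z - B l) + t • w := by
        rw [hw]
        simp only [map_add, map_smul, smul_sub]
        abel
      rw [hvt]
      have e1 : ⟪(z - B l) + t • w, y - (l + t • η)⟫ =
          ⟪z - B l, y - l⟫ + t * ⟪w, y - l⟫ - t * ⟪z - B l, η⟫ - t * (t * ⟪w, η⟫) := by
        rw [show y - (l + t • η) = (y - l) - t • η by abel]
        simp only [inner_add_left, inner_sub_right, real_inner_smul_left,
          real_inner_smul_right]
        ring
      rw [e1, hηperp', hwη]
      have h2 : ⟪w, y - l⟫ = ⟪pv, y - l⟫ + sc * ⟪z - B l, y - l⟫ := by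
        simp only [hpv, inner_sub_left, real_inner_smul_left]
        ring
      have hy' : ∀ i, ⟪b i, y⟫ ≤ c i := by rw [hYrep] at hy; exact hy
      have h3 : ⟪pv, y - l⟫ ≤ 0 := hpvle _ (fun i hi => by
        rw [inner_sub_right]
        have := hy' i
        linarith [hi.ge, hi.le])
      have h4 : ⟪z - B l, y - l⟫ ≤ 0 := hN y hy
      have h5 : 0 ≤ 1 + t * sc := by
        have h6 : t * |sc| ≤ (1 / (|sc| + 1)) * |sc| :=
          mul_le_mul_of_nonneg_right (ht1.trans (min_le_right _ _)) (abs_nonneg _)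
        have h7 : (1 / (|sc| + 1)) * |sc| < 1 := by
          rw [div_mul_eq_mul_div, one_mul, div_lt_one (by positivity)]
          linarith [abs_nonneg sc]
        nlinarith [neg_abs_le sc, abs_nonneg sc, mul_le_mul_of_nonneg_left (neg_abs_le sc) ht.le]
      have h8 : (1 + t * sc) * ⟪z - B l, y - l⟫ ≤ 0 := mul_nonpos_of_nonneg_of_nonpos h5 h4
      have h9 : t * ⟪pv, y - l⟫ ≤ 0 := mul_nonpos_of_nonneg_of_nonpos ht.le h3
      rw [h2]
      nlinarith [h8, h9]
  -- build the sequence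
  refine ⟨fun k => (z + (t0 / (k + 1)) • u, l + (t0 / (k + 1)) • η), fun k => (k + 1) / t0,
    fun k => ?_, fun k => div_nonneg (by positivity) ht0pos.le, ?_, ?_⟩
  · exact hgraph _ (div_pos ht0pos (by positivity))
      (by rw [div_le_iff₀ (by positivity)]; nlinarith [ht0pos])
  · have h1 : Tendsto (fun k : ℕ => t0 / (k + 1 : ℝ)) atTop (𝓝 0) := by
      have h2 := tendsto_one_div_add_atTop_nhds_zero_nat.const_mul t0
      simpa [div_eq_mul_inv, mul_comm] using h2
    have hA : Tendsto (fun k : ℕ => z + (t0 / (k + 1)) • u) atTop (𝓝 z) := by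
      have h3 := (h1.smul_const u).const_add z
      simpa using h3
    have hB : Tendsto (fun k : ℕ => l + (t0 / (k + 1)) • η) atTop (𝓝 l) := by
      have h3 := (h1.smul_const η).const_add l
      simpa using h3
    exact hA.prodMk_nhds hB
  · have heq : ∀ k : ℕ, ((k + 1 : ℝ) / t0) •
        ((z + (t0 / (k + 1)) • u, l + (t0 / (k + 1)) • η) - (z, l)) = (u, η) := by
      intro k
      have hne : t0 * ((k : ℝ) + 1) ≠ 0 := ne_of_gt (mul_pos ht0pos (by positivity))
      have hx : ∀ x : Evec m, ((k + 1 : ℝ) / t0) • ((t0 / (k + 1)) • x) = x := by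
        intro x
        rw [smul_smul, div_mul_div_comm, mul_comm, div_self hne, one_smul]
      rw [Prod.mk_sub_mk, add_sub_cancel_left, add_sub_cancel_left, Prod.smul_mk, hx, hx]
    simp only [heq]
    exact tendsto_const_nhds

end GDerivBack

section MainIff

variable {m : ℕ}

lemma gDeriv_subdiff_iff {Y : Set (Evec m)} (hYne : Y.Nonempty) (hpoly : IsPolyhedral Y)
    {B : Evec m →L[ℝ] Evec m} (hBsym : ∀ u v : Evec m, ⟪B u, v⟫ = ⟪u, B v⟫)
    (hBpsd : ∀ u : Evec m, 0 ≤ ⟪u, B u⟫) {z l : Evec m}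
    (hl : l ∈ subdiff (thetaY Y B) z) (u η : Evec m) :
    η ∈ gDeriv (subdiff (thetaY Y B)) z l u ↔
      η ∈ critCone Y B z l ∧ u - B η ∈ polarCone (critCone Y B z l) ∧ ⟪u - B η, η⟫ = 0 :=
  ⟨gDeriv_subdiff_forward hYne hpoly hBsym hBpsd hl u η,
   fun h => gDeriv_subdiff_backward hYne hpoly hBsym hBpsd hl u η h.1 h.2.1 h.2.2⟩

end MainIff


/-- Equivalent description of criticality via piecewise linear-quadratic penalties. -/
theorem criticality_description {n m : ℕ} (Y : Set (Evec m)) (hYne : Y.Nonempty) (hYpoly : IsPolyhedral Y)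
    (B : Evec m →L[ℝ] Evec m) (hBsym : ∀ u v : Evec m, ⟪B u, v⟫ = ⟪u, B v⟫)
    (hBpsd : ∀ u : Evec m, 0 ≤ ⟪u, B u⟫)
    (f : Evec n → Evec n) (hf : Differentiable ℝ f)
    (Φ : Evec n → Evec m) (hΦ : ContDiff ℝ 2 Φ)
    (xo : Evec n) (lmo : Evec m)
    (hsol1 : Psi f Φ xo lmo = 0)
    (hsol2 : lmo ∈ subdiff (thetaY Y B) (Φ xo)) :
    (IsCriticalMult Y B f Φ xo lmo ↔
      ∃ (ξ : Evec n) (η : Evec m), ξ ≠ 0 ∧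
        fderiv ℝ (fun x => Psi f Φ x lmo) xo ξ +
          ContinuousLinearMap.adjoint (fderiv ℝ Φ xo) η = 0 ∧
        ⟪fderiv ℝ Φ xo ξ - B η, η⟫ = 0 ∧
        fderiv ℝ Φ xo ξ - B η ∈ polarCone (critCone Y B (Φ xo) lmo) ∧
        η ∈ critCone Y B (Φ xo) lmo) ∧
    (IsNoncriticalMult Y B f Φ xo lmo ↔
      ∀ (ξ : Evec n) (η : Evec m),
        (fderiv ℝ (fun x => Psi f Φ x lmo) xo ξ +
            ContinuousLinearMap.adjoint (fderiv ℝ Φ xo) η = 0 ∧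
          ⟪fderiv ℝ Φ xo ξ - B η, η⟫ = 0 ∧
          fderiv ℝ Φ xo ξ - B η ∈ polarCone (critCone Y B (Φ xo) lmo) ∧
          η ∈ critCone Y B (Φ xo) lmo) → ξ = 0) := by
  constructor
  · constructor
    · rintro ⟨ξ, hξ, η, hηg, heq⟩
      obtain ⟨h1, h2, h3⟩ :=
        (gDeriv_subdiff_iff hYne hYpoly hBsym hBpsd hsol2 (fderiv ℝ Φ xo ξ) η).1 hηg
      exact ⟨ξ, η, hξ, heq, h3, h2, h1⟩
    · rintro ⟨ξ, η, hξ, heq, h3, h2, h1⟩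
      exact ⟨ξ, hξ, η,
        (gDeriv_subdiff_iff hYne hYpoly hBsym hBpsd hsol2 (fderiv ℝ Φ xo ξ) η).2 ⟨h1, h2, h3⟩,
        heq⟩
  · constructor
    · rintro hnc ξ η ⟨heq, h3, h2, h1⟩
      exact hnc ξ η
        ((gDeriv_subdiff_iff hYne hYpoly hBsym hBpsd hsol2 (fderiv ℝ Φ xo ξ) η).2 ⟨h1, h2, h3⟩)
        heq
    · intro h ξ η hηg heq
      obtain ⟨h1, h2, h3⟩ :=
        (gDeriv_subdiff_iff hYne hYpoly hBsym hBpsd hsol2 (fderiv ℝ Φ xo ξ) η).1 hηg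
      exact h ξ η ⟨heq, h3, h2, h1⟩
end

section
/- Let (x̄,λ̄) be a solution of the variational system Ψ(x,λ) = 0, λ ∈ ∂θ(Φ(x)), and set z̄ := Φ(x̄). Then the following are equivalent: (i) Λ(x̄) = {λ̄}; (ii) the multiplier map M_{x̄} is calm at ((0,0),λ̄) and Λ(x̄) = {λ̄}; (iii) M_{x̄} is isolatedly calm at ((0,0),λ̄); (iv) the dual qualification condition D(∂θ)(z̄,λ̄)(0) ∩ ker ∇Φ(x̄)* = {0} holds. -/
open Filter Topology Metric Set Pointwise
open scoped RealInnerProductSpace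

section UCAux

variable {m : ℕ}

lemma uc_term_le (Y : Set (Evec m)) (B : Evec m →L[ℝ] Evec m) {y : Evec m} (hy : y ∈ Y)
    (u : Evec m) :
    ((⟪y, u⟫ - (1 / 2) * ⟪y, B y⟫ : ℝ) : EReal) ≤ thetaY Y B u := by
  unfold thetaY
  exact le_biSup (fun y => ((⟪y, u⟫ - (1 / 2) * ⟪y, B y⟫ : ℝ) : EReal)) hy

lemma uc_theta_le (Y : Set (Evec m)) (B : Evec m →L[ℝ] Evec m) (u : Evec m) {M : ℝ}
    (h : ∀ y ∈ Y, ⟪y, u⟫ - (1 / 2) * ⟪y, B y⟫ ≤ M) :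
    thetaY Y B u ≤ (M : EReal) :=
  iSup₂_le fun y hy => EReal.coe_le_coe_iff.mpr (h y hy)

lemma uc_expand (B : Evec m →L[ℝ] Evec m) (hBsym : ∀ u v : Evec m, ⟪B u, v⟫ = ⟪u, B v⟫)
    (z lam y : Evec m) :
    ⟪y, z⟫ - (1 / 2) * ⟪y, B y⟫ - (⟪lam, z⟫ - (1 / 2) * ⟪lam, B lam⟫)
      = ⟪z - B lam, y - lam⟫ - (1 / 2) * ⟪y - lam, B (y - lam)⟫ := by
  have h1 : B (y - lam) = B y - B lam := map_sub _ _ _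
  have h2 : ⟪lam, B y⟫ = ⟪y, B lam⟫ := by rw [← hBsym, real_inner_comm]
  have h3 : ⟪y, z⟫ = ⟪z, y⟫ := real_inner_comm _ _
  have h4 : ⟪lam, z⟫ = ⟪z, lam⟫ := real_inner_comm _ _
  have h5 : ⟪B lam, y⟫ = ⟪y, B lam⟫ := real_inner_comm _ _
  have h6 : ⟪B lam, lam⟫ = ⟪lam, B lam⟫ := real_inner_comm _ _
  rw [h1]
  simp only [inner_sub_left, inner_sub_right]
  linarith

lemma uc_theta_eq (Y : Set (Evec m)) (B : Evec m →L[ℝ] Evec m)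
    (hBsym : ∀ u v : Evec m, ⟪B u, v⟫ = ⟪u, B v⟫) (hBpsd : ∀ u : Evec m, 0 ≤ ⟪u, B u⟫)
    {z lam : Evec m} (hlam : lam ∈ Y) (hn : ∀ y ∈ Y, ⟪z - B lam, y - lam⟫ ≤ 0) :
    thetaY Y B z = ((⟪lam, z⟫ - (1 / 2) * ⟪lam, B lam⟫ : ℝ) : EReal) := by
  refine le_antisymm (uc_theta_le _ _ _ fun y hy => ?_) (uc_term_le _ _ hlam _)
  have he := uc_expand B hBsym z lam y
  have h0 := hBpsd (y - lam)
  have h1 := hn y hy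
  linarith

lemma uc_Bzero (B : Evec m →L[ℝ] Evec m)
    (hBsym : ∀ u v : Evec m, ⟪B u, v⟫ = ⟪u, B v⟫) (hBpsd : ∀ u : Evec m, 0 ≤ ⟪u, B u⟫)
    {η : Evec m} (h : ⟪B η, η⟫ ≤ 0) : B η = 0 := by
  by_contra hne
  set w := B η with hw
  have hc : 0 < ⟪w, w⟫ := lt_of_not_ge fun hle => hne (real_inner_self_nonpos.mp hle)
  set d := ⟪w, B w⟫ with hd
  have hd0 : 0 ≤ d := hBpsd w
  set s : ℝ := d + 1 with hs
  have hs0 : (0:ℝ) < s := by linarith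
  set t : ℝ := -⟪w, w⟫ / s with ht
  have hts : t * s = -⟪w, w⟫ := by rw [ht, div_mul_cancel₀ _ hs0.ne']
  have hp := hBpsd (η + t • w)
  have hexp : ⟪η + t • w, B (η + t • w)⟫
      = ⟪η, B η⟫ + t * ⟪η, B w⟫ + t * ⟪w, B η⟫ + t * t * ⟪w, B w⟫ := by
    rw [map_add, map_smul]
    simp only [inner_add_left, inner_add_right, real_inner_smul_left, real_inner_smul_right]
    ring
  have hsym1 : ⟪η, B w⟫ = ⟪w, w⟫ := by
    rw [← hBsym η w, hw, real_inner_comm]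
  have hη0 : ⟪η, B η⟫ ≤ 0 := by rw [real_inner_comm]; exact h
  have hη0' : ⟪η, B η⟫ = 0 := le_antisymm hη0 (hBpsd η)
  rw [hexp, hη0', hsym1, ← hw] at hp
  set c : ℝ := ⟪w, w⟫ with hcdef
  have hps : 0 ≤ (0 + t * c + t * c + t * t * d) * (s * s) :=
    mul_nonneg hp (by positivity)
  have key : (0 + t * c + t * c + t * t * d) * (s * s)
      = 2 * c * s * (t * s) + d * ((t * s) * (t * s)) := by ring
  rw [hts] at key
  rw [key] at hps
  have hcc : 0 < c * c := mul_pos hc hc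
  nlinarith [mul_nonneg hd0 hcc.le]

lemma uc_mem_subdiff_iff (Y : Set (Evec m)) (B : Evec m →L[ℝ] Evec m)
    (hYne : Y.Nonempty) (hYpoly : IsPolyhedral Y)
    (hBsym : ∀ u v : Evec m, ⟪B u, v⟫ = ⟪u, B v⟫) (hBpsd : ∀ u : Evec m, 0 ≤ ⟪u, B u⟫)
    (z lam : Evec m) :
    lam ∈ subdiff (thetaY Y B) z ↔ lam ∈ Y ∧ ∀ y ∈ Y, ⟪z - B lam, y - lam⟫ ≤ 0 := by
  constructor
  · intro h
    obtain ⟨y0, hy0⟩ := hYne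
    obtain ⟨p, b, c, hY⟩ := hYpoly
    have hbot : (⊥ : EReal) < thetaY Y B z :=
      lt_of_lt_of_le (EReal.bot_lt_coe _) (uc_term_le Y B hy0 z)
    have hθ0 : thetaY Y B 0 ≤ ((0 : ℝ) : EReal) := by
      refine uc_theta_le _ _ _ fun y hy => ?_
      have := hBpsd y
      simp only [inner_zero_right]
      linarith
    have htop : thetaY Y B z ≠ ⊤ := by
      intro hT
      have h0 : thetaY Y B z + ((⟪lam, 0 - z⟫ : ℝ) : EReal) ≤ thetaY Y B 0 := h 0
      rw [hT, EReal.top_add_coe] at h0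
      exact absurd (le_trans h0 hθ0) (by simp)
    set r := (thetaY Y B z).toReal with hr
    have hzr : thetaY Y B z = (r : EReal) := (EReal.coe_toReal htop hbot.ne').symm
    have hterm_le : ∀ y ∈ Y, ⟪y, z⟫ - (1 / 2) * ⟪y, B y⟫ ≤ r := by
      intro y hy
      have := uc_term_le Y B hy z
      rw [hzr] at this
      exact_mod_cast this
    have hlamY : lam ∈ Y := by
      rw [hY]
      intro i
      have h1 := h (z + b i)
      have h2 : thetaY Y B (z + b i) ≤ ((r + c i : ℝ) : EReal) := by
        refine uc_theta_le _ _ _ fun y hy => ?_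
        have hbc : ⟪b i, y⟫ ≤ c i := by rw [hY] at hy; exact hy i
        have he : ⟪y, z + b i⟫ = ⟪y, z⟫ + ⟪y, b i⟫ := inner_add_right _ _ _
        have hco : ⟪y, b i⟫ = ⟪b i, y⟫ := real_inner_comm _ _
        have := hterm_le y hy
        linarith
      rw [hzr] at h1
      have hin : ⟪lam, z + b i - z⟫ = ⟪b i, lam⟫ := by
        rw [add_sub_cancel_left, real_inner_comm]
      rw [hin, ← EReal.coe_add] at h1
      have := EReal.coe_le_coe_iff.mp (le_trans h1 h2)
      linarith
    have hattain : r ≤ ⟪lam, z⟫ - (1 / 2) * ⟪lam, B lam⟫ := by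
      have h1 := h (B lam)
      have h2 : thetaY Y B (B lam)
          ≤ ((⟪lam, B lam⟫ - (1 / 2) * ⟪lam, B lam⟫ : ℝ) : EReal) := by
        refine uc_theta_le _ _ _ fun y hy => ?_
        have he := uc_expand B hBsym (B lam) lam y
        have h0 := hBpsd (y - lam)
        have hzz : ⟪B lam - B lam, y - lam⟫ = (0:ℝ) := by simp
        linarith
      rw [hzr] at h1
      have hin : ⟪lam, B lam - z⟫ = ⟪lam, B lam⟫ - ⟪lam, z⟫ := inner_sub_right _ _ _
      rw [hin, ← EReal.coe_add] at h1
      have := EReal.coe_le_coe_iff.mp (le_trans h1 h2)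
      linarith
    have hkey : ∀ y ∈ Y, ⟪z - B lam, y - lam⟫ ≤ (1 / 2) * ⟪y - lam, B (y - lam)⟫ := by
      intro y hy
      have he := uc_expand B hBsym z lam y
      have := le_trans (hterm_le y hy) hattain
      linarith
    refine ⟨hlamY, fun y hy => ?_⟩
    by_contra hcon
    push_neg at hcon
    set cc := ⟪z - B lam, y - lam⟫ with hcc
    set cq := ⟪y - lam, B (y - lam)⟫ with hcq
    have hcq0 : 0 ≤ cq := hBpsd _
    set s : ℝ := min 1 (cc / (cq + 1)) with hsdef
    have hs0 : 0 < s := lt_min one_pos (div_pos hcon (by linarith))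
    have hs1 : s ≤ 1 := min_le_left _ _
    have hs2 : s ≤ cc / (cq + 1) := min_le_right _ _
    have hys : lam + s • (y - lam) ∈ Y := by
      rw [hY]
      intro i
      have hyY : ⟪b i, y⟫ ≤ c i := by rw [hY] at hy; exact hy i
      have hlY : ⟪b i, lam⟫ ≤ c i := by rw [hY] at hlamY; exact hlamY i
      have hin : ⟪b i, lam + s • (y - lam)⟫
          = ⟪b i, lam⟫ + s * (⟪b i, y⟫ - ⟪b i, lam⟫) := by
        rw [inner_add_right, real_inner_smul_right, inner_sub_right]
      rw [hin]
      nlinarith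
    have h2 := hkey _ hys
    have hsimp1 : lam + s • (y - lam) - lam = s • (y - lam) := add_sub_cancel_left _ _
    rw [hsimp1, real_inner_smul_right, map_smul, real_inner_smul_left,
      real_inner_smul_right] at h2
    -- h2 : s * cc ≤ 1/2 * (s * (s * cq))
    have hsc : s * (cq + 1) ≤ cc := by
      rw [div_eq_mul_inv] at hs2
      have := (le_div_iff₀ (by linarith : (0:ℝ) < cq + 1)).mp (hs2.trans_eq (div_eq_mul_inv _ _).symm)
      linarith [this]
    nlinarith
  · rintro ⟨hlamY, hn⟩ u
    rw [uc_theta_eq Y B hBsym hBpsd hlamY hn]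
    have hco : ((⟪lam, z⟫ - (1 / 2) * ⟪lam, B lam⟫ : ℝ) : EReal) + ((⟪lam, u - z⟫ : ℝ) : EReal)
        = ((⟪lam, u⟫ - (1 / 2) * ⟪lam, B lam⟫ : ℝ) : EReal) := by
      rw [← EReal.coe_add]
      congr 1
      rw [inner_sub_right]
      ring
    rw [hco]
    exact uc_term_le Y B hlamY u

lemma uc_subdiff_seg {θ : Evec m → EReal} {z v w : Evec m}
    (hv : v ∈ subdiff θ z) (hw : w ∈ subdiff θ z) {s : ℝ} (h0 : 0 ≤ s) (h1 : s ≤ 1) :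
    v + s • (w - v) ∈ subdiff θ z := by
  intro u
  have hv' := hv u
  have hw' := hw u
  have hin : ⟪v + s • (w - v), u - z⟫ = (1 - s) * ⟪v, u - z⟫ + s * ⟪w, u - z⟫ := by
    rw [inner_add_left, real_inner_smul_left, inner_sub_left]; ring
  rw [hin]
  rcases le_total ⟪v, u - z⟫ ⟪w, u - z⟫ with hle | hle
  · refine le_trans (add_le_add_right ?_ _) hw'
    exact EReal.coe_le_coe_iff.mpr (by nlinarith)
  · refine le_trans (add_le_add_right ?_ _) hv'
    exact EReal.coe_le_coe_iff.mpr (by nlinarith)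

end UCAux

set_option maxHeartbeats 2000000 in
/-- Characterizations of uniqueness of Lagrange multipliers in variational systems. -/
theorem uniqueness_characterizations {n m : ℕ} (Y : Set (Evec m)) (hYne : Y.Nonempty) (hYpoly : IsPolyhedral Y)
    (B : Evec m →L[ℝ] Evec m) (hBsym : ∀ u v : Evec m, ⟪B u, v⟫ = ⟪u, B v⟫)
    (hBpsd : ∀ u : Evec m, 0 ≤ ⟪u, B u⟫)
    (f : Evec n → Evec n) (hf : Differentiable ℝ f)
    (Φ : Evec n → Evec m) (hΦ : ContDiff ℝ 2 Φ)
    (xo : Evec n) (lmo : Evec m)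
    (hsol1 : Psi f Φ xo lmo = 0)
    (hsol2 : lmo ∈ subdiff (thetaY Y B) (Φ xo)) :
    List.TFAE
      [LagMult Y B f Φ xo = {lmo},
       Calm (MultMap Y B f Φ xo) ((0, 0) : Evec n × Evec m) lmo ∧
         LagMult Y B f Φ xo = {lmo},
       IsolCalm (MultMap Y B f Φ xo) ((0, 0) : Evec n × Evec m) lmo,
       gDeriv (subdiff (thetaY Y B)) (Φ xo) lmo 0 ∩
           {v | ContinuousLinearMap.adjoint (fderiv ℝ Φ xo) v = 0} = {0}] := by
  classical
  have hsub := uc_mem_subdiff_iff Y B hYne hYpoly hBsym hBpsd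
  have hM00 : MultMap Y B f Φ xo ((0, 0) : Evec n × Evec m) = LagMult Y B f Φ xo := by
    unfold MultMap LagMult
    norm_num
  have hlmoMem : lmo ∈ LagMult Y B f Φ xo := ⟨hsol1, hsol2⟩
  tfae_have 2 → 1 := fun h => h.2
  tfae_have 3 → 2 := by
    rintro ⟨ℓ, hℓ, U, hU, V, hV, hic⟩
    have hzero : ∀ w ∈ LagMult Y B f Φ xo ∩ V, w = lmo := by
      intro w hw
      have h1 := hic ((0, 0) : Evec n × Evec m) (mem_of_mem_nhds hU) w
        (by rw [hM00]; exact hw)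
      have h2 : ‖((0, 0) : Evec n × Evec m) - (0, 0)‖ = 0 := by simp
      rw [h2, mul_zero] at h1
      have := le_antisymm h1 (norm_nonneg _)
      rwa [norm_sub_eq_zero_iff] at this
    have hL1 : LagMult Y B f Φ xo = {lmo} := by
      apply Set.eq_singleton_iff_unique_mem.mpr
      refine ⟨hlmoMem, fun lam hlam => ?_⟩
      obtain ⟨ε, hε, hball⟩ := Metric.mem_nhds_iff.mp hV
      set s : ℝ := min 1 (ε / (2 * (‖lam - lmo‖ + 1))) with hs
      have hden : (0:ℝ) < 2 * (‖lam - lmo‖ + 1) := by positivity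
      have hs0 : 0 < s := lt_min one_pos (div_pos hε hden)
      have hs1 : s ≤ 1 := min_le_left _ _
      have hmemV : lmo + s • (lam - lmo) ∈ V := by
        apply hball
        rw [Metric.mem_ball, dist_eq_norm]
        have he : lmo + s • (lam - lmo) - lmo = s • (lam - lmo) := add_sub_cancel_left _ _
        rw [he, norm_smul, Real.norm_eq_abs, abs_of_pos hs0]
        have h2 : s ≤ ε / (2 * (‖lam - lmo‖ + 1)) := min_le_right _ _
        have h3 : s * ‖lam - lmo‖ ≤ (ε / (2 * (‖lam - lmo‖ + 1))) * ‖lam - lmo‖ :=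
          mul_le_mul_of_nonneg_right h2 (norm_nonneg _)
        have h4 : (ε / (2 * (‖lam - lmo‖ + 1))) * ‖lam - lmo‖ < ε := by
          rw [div_mul_eq_mul_div, div_lt_iff₀ hden]
          nlinarith [norm_nonneg (lam - lmo)]
        linarith
      have hmemL : lmo + s • (lam - lmo) ∈ LagMult Y B f Φ xo := by
        constructor
        · have e1 : Psi f Φ xo lam = 0 := hlam.1
          have e2 : Psi f Φ xo lmo = 0 := hsol1
          unfold Psi at e1 e2 ⊢
          rw [map_add, map_smul, map_sub]
          have e3 : ContinuousLinearMap.adjoint (fderiv ℝ Φ xo) lam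
              = ContinuousLinearMap.adjoint (fderiv ℝ Φ xo) lmo :=
            add_left_cancel (e1.trans e2.symm)
          rw [e3, sub_self, smul_zero, add_zero]
          exact e2
        · exact uc_subdiff_seg hsol2 hlam.2 hs0.le hs1
      have heq := hzero _ ⟨hmemL, hmemV⟩
      have hz : s • (lam - lmo) = 0 := by
        rwa [add_eq_left] at heq
      rcases smul_eq_zero.mp hz with h | h
      · exact absurd h hs0.ne'
      · exact sub_eq_zero.mp h
    refine ⟨⟨ℓ, hℓ, U, hU, V, hV, fun z hz w hw =>
      ⟨lmo, by rw [hM00]; exact hlmoMem, hic z hz w hw⟩⟩, hL1⟩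
  tfae_have 4 → 3 := by
    intro h4
    by_contra hnc
    unfold IsolCalm at hnc
    push_neg at hnc
    have hstep : ∀ k : ℕ, ∃ z : Evec n × Evec m, ‖z‖ < 1 / (k + 1) ∧
        ∃ w : Evec m, (Psi f Φ xo w = z.1 ∧ w ∈ subdiff (thetaY Y B) (Φ xo + z.2)) ∧
          ‖w - lmo‖ < 1 / (k + 1) ∧ (k : ℝ) * ‖z‖ < ‖w - lmo‖ := by
      intro k
      have hpos : (0 : ℝ) < 1 / (k + 1) := by positivity
      obtain ⟨z, hzU, w, hwF, hgt⟩ := hnc k (Nat.cast_nonneg k)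
        (Metric.ball (0, 0) (1 / (k + 1))) (Metric.ball_mem_nhds _ hpos)
        (Metric.ball lmo (1 / (k + 1))) (Metric.ball_mem_nhds _ hpos)
      have hzn : ‖z - ((0, 0) : Evec n × Evec m)‖ = ‖z‖ := by
        rw [Prod.mk_zero_zero, sub_zero]
      refine ⟨z, ?_, w, hwF.1, by simpa [dist_eq_norm] using hwF.2, by rwa [hzn] at hgt⟩
      have := Metric.mem_ball.mp hzU
      rwa [dist_eq_norm, hzn] at this
    choose z hz1 w hw hwb hgt using hstep
    set t : ℕ → ℝ := fun k => ‖w k - lmo‖ with htdef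
    have ht0 : ∀ k, 0 < t k := fun k =>
      lt_of_le_of_lt (mul_nonneg (Nat.cast_nonneg k) (norm_nonneg _)) (hgt k)
    set ηs : ℕ → Evec m := fun k => (t k)⁻¹ • (w k - lmo) with hηdef
    have hηmem : ∀ k, ηs k ∈ Metric.sphere (0 : Evec m) 1 := by
      intro k
      rw [mem_sphere_iff_norm, sub_zero, hηdef]
      simp only
      rw [norm_smul, norm_inv, Real.norm_eq_abs, abs_of_pos (ht0 k)]
      exact inv_mul_cancel₀ (ht0 k).ne'
    obtain ⟨η, hηS, φ, hφ, hηconv⟩ := (isCompact_sphere (0 : Evec m) 1).tendsto_subseq hηmem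
    have hφtop : Tendsto φ atTop atTop := hφ.tendsto_atTop
    have hfrac : ∀ j : ℕ, 1 ≤ j → (t j)⁻¹ * ‖z j‖ ≤ ((j : ℝ))⁻¹ := by
      intro j hj
      have hj0 : (0 : ℝ) < j := by exact_mod_cast hj
      have h2 : (j : ℝ) * ‖z j‖ ≤ t j := (hgt j).le
      rw [inv_mul_eq_div, div_le_iff₀ (ht0 j), ← div_eq_inv_mul, le_div_iff₀ hj0,
        mul_comm]
      exact h2
    have hrecip : Tendsto (fun k : ℕ => ((φ k : ℝ))⁻¹) atTop (𝓝 0) :=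
      tendsto_inv_atTop_nhds_zero_nat.comp hφtop
    have hz2 : Tendsto (fun j : ℕ => (z j).2) atTop (𝓝 0) := by
      apply squeeze_zero_norm (a := fun j : ℕ => 1 / (j + 1))
      · exact fun j => le_trans (norm_snd_le (z j)) (hz1 j).le
      · exact tendsto_one_div_add_atTop_nhds_zero_nat
    have hwconv : Tendsto w atTop (𝓝 lmo) := by
      rw [← tendsto_sub_nhds_zero_iff]
      apply squeeze_zero_norm (a := fun j : ℕ => 1 / (j + 1))
      · exact fun j => (hwb j).le
      · exact tendsto_one_div_add_atTop_nhds_zero_nat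
    have hevφ : ∀ᶠ k in atTop, 1 ≤ φ k := hφtop.eventually (eventually_ge_atTop 1)
    have hmemT : η ∈ gDeriv (subdiff (thetaY Y B)) (Φ xo) lmo 0 := by
      refine ⟨fun k => (Φ xo + (z (φ k)).2, w (φ k)), fun k => (t (φ k))⁻¹, ?_, ?_, ?_, ?_⟩
      · exact fun k => (hw (φ k)).2
      · exact fun k => (inv_nonneg).mpr (ht0 (φ k)).le
      · apply Filter.Tendsto.prodMk_nhds
        · simpa using (tendsto_const_nhds.add (hz2.comp hφtop))
        · exact hwconv.comp hφtop
      · apply Filter.Tendsto.prodMk_nhds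
        · apply squeeze_zero_norm' (a := fun k : ℕ => ((φ k : ℝ))⁻¹) _ hrecip
          filter_upwards [hevφ] with k hk
          simp only [Prod.fst_sub]
          have heq : (Φ xo + (z (φ k)).2) - Φ xo = (z (φ k)).2 := add_sub_cancel_left _ _
          rw [heq, norm_smul, norm_inv, Real.norm_eq_abs, abs_of_pos (ht0 (φ k))]
          exact le_trans (mul_le_mul_of_nonneg_left (norm_snd_le (z (φ k)))
            (inv_nonneg.mpr (ht0 (φ k)).le)) (hfrac _ hk)
        · exact hηconv
    have hadj : ∀ j, ContinuousLinearMap.adjoint (fderiv ℝ Φ xo) (w j - lmo) = (z j).1 := by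
      intro j
      have h1 := (hw j).1
      have h2 := hsol1
      unfold Psi at h1 h2
      rw [map_sub]
      have e1 : ContinuousLinearMap.adjoint (fderiv ℝ Φ xo) (w j) = (z j).1 - f xo :=
        eq_sub_of_add_eq' h1
      have e2 : ContinuousLinearMap.adjoint (fderiv ℝ Φ xo) lmo = -f xo :=
        eq_neg_of_add_eq_zero_right h2
      rw [e1, e2]
      abel
    have hAη : Tendsto (fun k => ContinuousLinearMap.adjoint (fderiv ℝ Φ xo) (ηs (φ k)))
        atTop (𝓝 (ContinuousLinearMap.adjoint (fderiv ℝ Φ xo) η)) :=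
      ((ContinuousLinearMap.adjoint (fderiv ℝ Φ xo)).continuous.tendsto _).comp hηconv
    have hAzero : Tendsto (fun k => ContinuousLinearMap.adjoint (fderiv ℝ Φ xo) (ηs (φ k)))
        atTop (𝓝 0) := by
      apply squeeze_zero_norm' (a := fun k : ℕ => ((φ k : ℝ))⁻¹) _ hrecip
      filter_upwards [hevφ] with k hk
      have he : ContinuousLinearMap.adjoint (fderiv ℝ Φ xo) (ηs (φ k))
          = (t (φ k))⁻¹ • (z (φ k)).1 := by
        rw [hηdef]
        simp only
        rw [map_smul, hadj]
      rw [he, norm_smul, norm_inv, Real.norm_eq_abs, abs_of_pos (ht0 (φ k))]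
      exact le_trans (mul_le_mul_of_nonneg_left (norm_fst_le (z (φ k)))
        (inv_nonneg.mpr (ht0 (φ k)).le)) (hfrac _ hk)
    have hA0 : ContinuousLinearMap.adjoint (fderiv ℝ Φ xo) η = 0 :=
      tendsto_nhds_unique hAη hAzero
    have : η ∈ (gDeriv (subdiff (thetaY Y B)) (Φ xo) lmo 0 ∩
        {v | ContinuousLinearMap.adjoint (fderiv ℝ Φ xo) v = 0}) := ⟨hmemT, hA0⟩
    rw [h4] at this
    have hη0 : η = 0 := this
    rw [mem_sphere_iff_norm, sub_zero] at hηS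
    rw [hη0, norm_zero] at hηS
    exact one_ne_zero hηS.symm
  tfae_have 1 → 4 := by
    intro h1
    apply Set.eq_singleton_iff_unique_mem.mpr
    constructor
    · refine ⟨⟨fun _ => (Φ xo, lmo), fun _ => 0, fun _ => hsol2, fun _ => le_rfl,
        tendsto_const_nhds, ?_⟩, ?_⟩
      · have he : (fun _ : ℕ => (0 : ℝ) • ((Φ xo, lmo) - (Φ xo, lmo)))
            = fun _ : ℕ => ((0, 0) : Evec m × Evec m) := by
          funext k
          rw [zero_smul, Prod.mk_zero_zero]
        rw [he, Prod.mk_zero_zero]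
        exact tendsto_const_nhds
      · exact map_zero _
    · rintro η ⟨hηT, hηK⟩
      simp only [Set.mem_setOf_eq] at hηK
      obtain ⟨zs, a, hgr, ha, hzs, hlim⟩ := hηT
      have hus : Tendsto (fun k => (zs k).1) atTop (𝓝 (Φ xo)) :=
        (continuous_fst.tendsto _).comp hzs
      have hls : Tendsto (fun k => (zs k).2) atTop (𝓝 lmo) :=
        (continuous_snd.tendsto _).comp hzs
      have hlim1 : Tendsto (fun k => a k • ((zs k).1 - Φ xo)) atTop (𝓝 0) :=
        (continuous_fst.tendsto _).comp hlim
      have hlim2 : Tendsto (fun k => a k • ((zs k).2 - lmo)) atTop (𝓝 η) :=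
        (continuous_snd.tendsto _).comp hlim
      have hgr' : ∀ k, (zs k).2 ∈ Y ∧ ∀ y ∈ Y, ⟪(zs k).1 - B ((zs k).2), y - (zs k).2⟫ ≤ 0 :=
        fun k => (hsub _ _).mp (hgr k)
      have hbar := (hsub _ _).mp hsol2
      -- Step A : B η = 0
      have hkey : ∀ k, ⟪B (a k • ((zs k).2 - lmo)), a k • ((zs k).2 - lmo)⟫
          ≤ ⟪a k • ((zs k).1 - Φ xo), a k • ((zs k).2 - lmo)⟫ := by
        intro k
        have h1' := (hgr' k).2 lmo hbar.1
        have h2' := hbar.2 _ (hgr' k).1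
        have hbase : ⟪B ((zs k).2 - lmo), (zs k).2 - lmo⟫
            ≤ ⟪(zs k).1 - Φ xo, (zs k).2 - lmo⟫ := by
          rw [map_sub]
          simp only [inner_sub_left, inner_sub_right] at h1' h2' ⊢
          linarith
        calc ⟪B (a k • ((zs k).2 - lmo)), a k • ((zs k).2 - lmo)⟫
            = a k * a k * ⟪B ((zs k).2 - lmo), (zs k).2 - lmo⟫ := by
              rw [map_smul, real_inner_smul_left, real_inner_smul_right]; ring
          _ ≤ a k * a k * ⟪(zs k).1 - Φ xo, (zs k).2 - lmo⟫ :=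
              mul_le_mul_of_nonneg_left hbase (mul_nonneg (ha k) (ha k))
          _ = ⟪a k • ((zs k).1 - Φ xo), a k • ((zs k).2 - lmo)⟫ := by
              rw [real_inner_smul_left, real_inner_smul_right]; ring
      have hBηη : ⟪B η, η⟫ ≤ 0 := by
        have hL : Tendsto (fun k => ⟪B (a k • ((zs k).2 - lmo)), a k • ((zs k).2 - lmo)⟫)
            atTop (𝓝 ⟪B η, η⟫) :=
          ((B.continuous.tendsto _).comp hlim2).inner hlim2
        have hR : Tendsto (fun k => ⟪a k • ((zs k).1 - Φ xo), a k • ((zs k).2 - lmo)⟫)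
            atTop (𝓝 ⟪(0 : Evec m), η⟫) := hlim1.inner hlim2
        have := le_of_tendsto_of_tendsto' hL hR hkey
        simpa using this
      have hBη : B η = 0 := uc_Bzero B hBsym hBpsd hBηη
      -- Step B : ⟪Φ xo - B lmo, η⟫ = 0
      have hb1 : ⟪Φ xo - B lmo, η⟫ ≤ 0 := by
        have hT : Tendsto (fun k => ⟪Φ xo - B lmo, a k • ((zs k).2 - lmo)⟫)
            atTop (𝓝 ⟪Φ xo - B lmo, η⟫) := tendsto_const_nhds.inner hlim2
        refine le_of_tendsto hT (Filter.Eventually.of_forall fun k => ?_)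
        rw [real_inner_smul_right]
        exact mul_nonpos_iff.mpr (Or.inl ⟨ha k, hbar.2 _ (hgr' k).1⟩)
      have hb2 : 0 ≤ ⟪Φ xo - B lmo, η⟫ := by
        have hT : Tendsto (fun k => ⟪(zs k).1 - B ((zs k).2), a k • ((zs k).2 - lmo)⟫)
            atTop (𝓝 ⟪Φ xo - B lmo, η⟫) :=
          (hus.sub ((B.continuous.tendsto _).comp hls)).inner hlim2
        refine ge_of_tendsto hT (Filter.Eventually.of_forall fun k => ?_)
        rw [real_inner_smul_right]
        apply mul_nonneg (ha k)
        have hk := (hgr' k).2 lmo hbar.1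
        rw [show (zs k).2 - lmo = -(lmo - (zs k).2) from (neg_sub _ _).symm, inner_neg_right]
        linarith
      have hvη : ⟪Φ xo - B lmo, η⟫ = 0 := le_antisymm hb1 hb2
      -- Step C : a small step stays in Y
      obtain ⟨p, b, c, hY⟩ := hYpoly
      have hbiη : ∀ i, ⟪b i, lmo⟫ = c i → ⟪b i, η⟫ ≤ 0 := by
        intro i hact
        have hT : Tendsto (fun k => ⟪b i, a k • ((zs k).2 - lmo)⟫)
            atTop (𝓝 ⟪b i, η⟫) := tendsto_const_nhds.inner hlim2
        refine le_of_tendsto hT (Filter.Eventually.of_forall fun k => ?_)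
        rw [real_inner_smul_right]
        refine mul_nonpos_iff.mpr (Or.inl ⟨ha k, ?_⟩)
        have hmemY : (zs k).2 ∈ {y : Evec m | ∀ i, ⟪b i, y⟫ ≤ c i} := hY ▸ (hgr' k).1
        have := hmemY i
        rw [inner_sub_right]
        linarith [hact]
      have hev : ∀ᶠ s in 𝓝[>] (0 : ℝ), lmo + s • η ∈ Y := by
        have hall : ∀ i, ∀ᶠ s in 𝓝[>] (0 : ℝ), ⟪b i, lmo + s • η⟫ ≤ c i := by
          intro i
          have hle : ⟪b i, lmo⟫ ≤ c i := by
            have hmemY : lmo ∈ {y : Evec m | ∀ i, ⟪b i, y⟫ ≤ c i} := hY ▸ hbar.1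
            exact hmemY i
          have hform : ∀ s : ℝ, ⟪b i, lmo + s • η⟫ = ⟪b i, lmo⟫ + s * ⟪b i, η⟫ := by
            intro s; rw [inner_add_right, real_inner_smul_right]
          rcases lt_or_eq_of_le hle with hlt | heqa
          · have htend : Tendsto (fun s : ℝ => ⟪b i, lmo⟫ + s * ⟪b i, η⟫) (𝓝[>] 0)
                (𝓝 (⟪b i, lmo⟫ + 0 * ⟪b i, η⟫)) := by
              apply Filter.Tendsto.mono_left _ nhdsWithin_le_nhds
              exact tendsto_const_nhds.add ((continuous_id.mul continuous_const).tendsto 0)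
            have : ∀ᶠ s in 𝓝[>] (0 : ℝ), ⟪b i, lmo⟫ + s * ⟪b i, η⟫ < c i := by
              apply htend.eventually_lt_const
              simpa using hlt
            filter_upwards [this] with s hs
            rw [hform s]
            exact hs.le
          · filter_upwards [self_mem_nhdsWithin] with s hs
            rw [hform s]
            have := mul_nonpos_iff.mpr (Or.inl ⟨(le_of_lt hs), hbiη i heqa⟩)
            linarith
        have := (Filter.eventually_all (ι := Fin p)).mpr hall
        filter_upwards [this] with s hs
        rw [hY]
        exact hs
      obtain ⟨s, hsY, hs0⟩ := (hev.and self_mem_nhdsWithin).exists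
      have hmem : lmo + s • η ∈ LagMult Y B f Φ xo := by
        constructor
        · unfold Psi
          rw [map_add, map_smul, hηK, smul_zero, add_zero]
          exact hsol1
        · apply (hsub _ _).mpr
          refine ⟨hsY, fun y hy => ?_⟩
          have hBs : B (lmo + s • η) = B lmo := by
            rw [map_add, map_smul, hBη, smul_zero, add_zero]
          rw [hBs]
          have hby := hbar.2 y hy
          have hre : y - (lmo + s • η) = (y - lmo) - s • η := by abel
          rw [hre, inner_sub_right, real_inner_smul_right, hvη]
          linarith
      rw [h1] at hmem
      have heq : lmo + s • η = lmo := hmem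
      have h0' : s • η = 0 := by rwa [add_eq_left] at heq
      rcases smul_eq_zero.mp h0' with h | h
      · exact absurd h (ne_of_gt hs0)
      · exact h
  tfae_finish
end

section
/- Let (x̄,λ̄) be a solution of the KKT system ∇_xL(x,λ) = 0, λ ∈ ∂θ(Φ(x)) for the ENLP, set z̄ := Φ(x̄), and let K := T_Y(λ̄) ∩ {z̄ − Bλ̄}^⊥ be the critical cone. Then for every w ∈ ℝ^n the second subderivative of φ := φ₀ + θ∘Φ satisfies d²φ(x̄,0)(w) ≥ ⟨∇²_{xx}L(x̄,λ̄)w, w⟩ + 2 θ_{K,B}(∇Φ(x̄)w). -/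
open Filter Topology Metric Set Pointwise
open scoped RealInnerProductSpace

section AuxLemmas

open InnerProductSpace

/-- The inverse of `toDual` over `ℝ`, seen as a plain linear isometry equivalence. -/
noncomputable def eeIso (n : ℕ) :
    StrongDual ℝ (Evec n) ≃ₗᵢ[ℝ] Evec n := (toDual ℝ (Evec n)).symm

lemma tangent_eventually {k : ℕ} {Y : Set (Evec k)} (hY : IsPolyhedral Y)
    {lmo κ : Evec k} (hκ : κ ∈ bTangentCone Y lmo) :
    ∀ᶠ t in 𝓝[>] (0:ℝ), lmo + t • κ ∈ Y := by
  obtain ⟨p, b, c, rfl⟩ := hY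
  obtain ⟨zs, a, hzs, ha, hz, hk⟩ := hκ
  have hlm : ∀ i, ⟪b i, lmo⟫ ≤ c i := fun i =>
    le_of_tendsto (Filter.Tendsto.inner tendsto_const_nhds hz)
      (Filter.Eventually.of_forall fun j => hzs j i)
  simp only [Set.mem_setOf_eq]
  rw [eventually_all]
  intro i
  rcases eq_or_lt_of_le (hlm i) with hact | hslack
  · have hbk : ⟪b i, κ⟫ ≤ 0 := by
      refine le_of_tendsto (Filter.Tendsto.inner tendsto_const_nhds hk)
        (Filter.Eventually.of_forall fun j => ?_)
      have h1 : ⟪b i, zs j - lmo⟫ ≤ 0 := by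
        rw [inner_sub_right]
        have h2 := hzs j i
        linarith [hact]
      have h3 : ⟪b i, a j • (zs j - lmo)⟫ = a j * ⟪b i, zs j - lmo⟫ :=
        real_inner_smul_right _ _ _
      rw [h3]
      nlinarith [ha j]
    have hpos : ∀ᶠ t in 𝓝[>] (0:ℝ), 0 < t := self_mem_nhdsWithin
    filter_upwards [hpos] with t ht
    rw [inner_add_right, real_inner_smul_right]
    nlinarith [hlm i]
  · have hcont : Tendsto (fun t : ℝ => ⟪b i, lmo + t • κ⟫) (𝓝 0)
        (𝓝 ⟪b i, lmo + (0:ℝ) • κ⟫) :=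
      Filter.Tendsto.inner tendsto_const_nhds
        (tendsto_const_nhds.add (tendsto_id.smul_const κ))
    have h0 : ⟪b i, lmo + (0:ℝ) • κ⟫ < c i := by simpa using hslack
    have := (hcont.eventually_lt_const h0).filter_mono (nhdsWithin_le_nhds (s := Set.Ioi 0))
    exact this.mono fun t ht => ht.le

set_option maxHeartbeats 1000000 in
lemma tendsto_firstOrder {n m : ℕ} {Φ : Evec n → Evec m} {xo : Evec n}
    (hΦd : HasFDerivAt Φ (fderiv ℝ Φ xo) xo) (w : Evec n) :
    Tendsto (fun p : ℝ × Evec n => (p.1)⁻¹ • (Φ (xo + p.1 • p.2) - Φ xo))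
      ((𝓝[>] (0:ℝ)) ×ˢ 𝓝 w) (𝓝 (fderiv ℝ Φ xo w)) := by
  set A := fderiv ℝ Φ xo with hA
  set l := (𝓝[>] (0:ℝ)) ×ˢ 𝓝 w with hl
  have key : Tendsto (fun p : ℝ × Evec n =>
      (p.1)⁻¹ • (Φ (xo + p.1 • p.2) - Φ xo) - A p.2) l (𝓝 0) := by
    rw [NormedAddCommGroup.tendsto_nhds_zero]
    intro ε hε
    set M := ‖w‖ + 1 with hM
    have hM0 : 0 < M := by positivity
    have hMne : M ≠ 0 := ne_of_gt hM0
    have hc : 0 < ε / (2 * M) := by positivity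
    have hlit := Asymptotics.isLittleO_iff.mp hΦd.isLittleO hc
    rw [Metric.eventually_nhds_iff] at hlit
    obtain ⟨δ, hδ0, hδ⟩ := hlit
    have h1 : ∀ᶠ t in 𝓝[>] (0:ℝ), t ∈ Set.Ioo 0 (δ / M) :=
      Ioo_mem_nhdsGT_of_mem ⟨le_refl 0, by positivity⟩
    have h2 : ∀ᶠ w' in 𝓝 w, ‖w'‖ < M :=
      (continuous_norm.tendsto w).eventually_lt_const (by simp [hM])
    filter_upwards [h1.prod_mk h2] with p hp
    obtain ⟨⟨ht0, htδ⟩, hw'⟩ := hp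
    have htne : p.1 ≠ 0 := ne_of_gt ht0
    have harg : dist (xo + p.1 • p.2) xo < δ := by
      rw [dist_eq_norm, add_sub_cancel_left, norm_smul, Real.norm_eq_abs, abs_of_pos ht0]
      have h4 : p.1 * M < δ := (lt_div_iff₀ hM0).mp htδ
      nlinarith [norm_nonneg p.2]
    have hb := hδ harg
    rw [add_sub_cancel_left] at hb
    have heq : ((p.1)⁻¹ • (Φ (xo + p.1 • p.2) - Φ xo) - A p.2)
        = (p.1)⁻¹ • (Φ (xo + p.1 • p.2) - Φ xo - A (p.1 • p.2)) := by
      have hmap : A (p.1 • p.2) = p.1 • A p.2 := map_smul _ _ _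
      conv_rhs => rw [hmap, smul_sub, smul_smul, inv_mul_cancel₀ htne, one_smul]
    rw [heq, norm_smul, Real.norm_eq_abs, abs_of_pos (inv_pos.2 ht0)]
    have hns : ‖p.1 • p.2‖ = p.1 * ‖p.2‖ := by
      rw [norm_smul, Real.norm_eq_abs, abs_of_pos ht0]
    calc (p.1)⁻¹ * ‖Φ (xo + p.1 • p.2) - Φ xo - A (p.1 • p.2)‖
        ≤ (p.1)⁻¹ * (ε / (2 * M) * ‖p.1 • p.2‖) :=
          mul_le_mul_of_nonneg_left hb (by positivity)
      _ = ε / (2 * M) * ‖p.2‖ := by rw [hns]; field_simp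
      _ < ε := by
          have h5 : ε / (2 * M) * ‖p.2‖ ≤ ε / (2 * M) * M := by
            apply mul_le_mul_of_nonneg_left hw'.le (by positivity)
          have h6 : ε / (2 * M) * M = ε / 2 := by field_simp <;> ring
          linarith
  have h3 : Tendsto (fun p : ℝ × Evec n => A p.2) l (𝓝 (A w)) :=
    (A.continuous.tendsto w).comp tendsto_snd
  have h4 := key.add h3
  rw [zero_add] at h4
  exact h4.congr fun p => by abel

set_option maxHeartbeats 1000000 in
lemma tendsto_secondOrder {n : ℕ} {f : Evec n → ℝ} (hf : ContDiff ℝ 2 f) {xo : Evec n}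
    (h0 : fderiv ℝ f xo = 0) (w : Evec n) :
    Tendsto (fun p : ℝ × Evec n => 2 / p.1 ^ 2 * (f (xo + p.1 • p.2) - f xo))
      ((𝓝[>] (0:ℝ)) ×ˢ 𝓝 w) (𝓝 (fderiv ℝ (fderiv ℝ f) xo w w)) := by
  set D := fderiv ℝ f with hDdef
  set D2 := fderiv ℝ D xo with hD2def
  set l := (𝓝[>] (0:ℝ)) ×ˢ 𝓝 w with hl
  have hfd : ∀ x, HasFDerivAt f (D x) x := fun x =>
    ((hf.differentiable (by norm_num)) x).hasFDerivAt
  have hD1 : ContDiff ℝ 1 D := hf.fderiv_right (by norm_num)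
  have hDd : HasFDerivAt D D2 xo := ((hD1.differentiable (by norm_num)) xo).hasFDerivAt
  have quant : ∀ c : ℝ, 0 < c → ∃ δ > (0:ℝ), ∀ u : Evec n, ‖u‖ < δ →
      |f (xo + u) - f xo - D2 u u / 2| ≤ c * ‖u‖ ^ 2 := by
    intro c hc
    have hlit := Asymptotics.isLittleO_iff.mp hDd.isLittleO hc
    rw [Metric.eventually_nhds_iff] at hlit
    obtain ⟨δ, hδ0, hδ⟩ := hlit
    refine ⟨δ, hδ0, fun u hu => ?_⟩
    have hg : ∀ s ∈ Set.Icc (0:ℝ) 1,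
        HasDerivAt (fun s : ℝ => f (xo + s • u) - s ^ 2 / 2 * (D2 u u))
          ((D (xo + s • u)) u - s * (D2 u u)) s := by
      intro s _
      have hline : HasDerivAt (fun s : ℝ => xo + s • u) u s := by
        simpa using ((hasDerivAt_id s).smul_const u).const_add xo
      have h1 : HasDerivAt (fun s : ℝ => f (xo + s • u)) ((D (xo + s • u)) u) s := by
        exact (hfd (xo + s • u)).comp_hasDerivAt s hline
      have h2 : HasDerivAt (fun s : ℝ => s ^ 2 / 2 * (D2 u u)) (s * (D2 u u)) s := by
        have h3 := ((hasDerivAt_pow 2 s).div_const 2).mul_const (D2 u u)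
        exact h3.congr_deriv (by push_cast; ring)
      exact h1.sub h2
    have hbound : ∀ s ∈ Set.Icc (0:ℝ) 1,
        ‖(D (xo + s • u)) u - s * (D2 u u)‖ ≤ c * ‖u‖ ^ 2 := by
      intro s hs
      have hsu : ‖s • u‖ ≤ ‖u‖ := by
        rw [norm_smul, Real.norm_eq_abs]
        have habs : |s| ≤ 1 := abs_le.2 ⟨by linarith [hs.1], hs.2⟩
        nlinarith [norm_nonneg u]
      have harg : dist (xo + s • u) xo < δ := by
        rw [dist_eq_norm, add_sub_cancel_left]
        exact lt_of_le_of_lt hsu hu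
      have hb := hδ harg
      rw [add_sub_cancel_left, h0, sub_zero] at hb
      have hKs : (D2 (s • u)) u = s * (D2 u u) := by
        rw [map_smul, ContinuousLinearMap.smul_apply, smul_eq_mul]
      calc ‖(D (xo + s • u)) u - s * (D2 u u)‖
          = ‖(D (xo + s • u) - D2 (s • u)) u‖ := by
            rw [ContinuousLinearMap.sub_apply, hKs]
        _ ≤ ‖D (xo + s • u) - D2 (s • u)‖ * ‖u‖ := ContinuousLinearMap.le_opNorm _ _
        _ ≤ c * ‖s • u‖ * ‖u‖ := mul_le_mul_of_nonneg_right hb (norm_nonneg u)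
        _ ≤ c * ‖u‖ ^ 2 := by
            have h9 : c * ‖s • u‖ * ‖u‖ ≤ c * ‖u‖ * ‖u‖ :=
              mul_le_mul_of_nonneg_right (mul_le_mul_of_nonneg_left hsu hc.le) (norm_nonneg u)
            nlinarith [h9]
    have hmvt := Convex.norm_image_sub_le_of_norm_hasDerivWithin_le
        (fun s hs => (hg s hs).hasDerivWithinAt) hbound (convex_Icc 0 1)
        (Set.left_mem_Icc.2 zero_le_one) (Set.right_mem_Icc.2 zero_le_one)
    simp only [one_smul, zero_smul, add_zero, one_pow, Real.norm_eq_abs] at hmvt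
    have heq : (f (xo + u) - 1 / 2 * (D2 u u)) - (f xo - 0 ^ 2 / 2 * (D2 u u))
        = f (xo + u) - f xo - D2 u u / 2 := by ring
    calc |f (xo + u) - f xo - D2 u u / 2|
        = |(f (xo + u) - 1 / 2 * (D2 u u)) - (f xo - 0 ^ 2 / 2 * (D2 u u))| := by rw [heq]
      _ ≤ c * ‖u‖ ^ 2 * |1 - 0| := hmvt
      _ = c * ‖u‖ ^ 2 := by norm_num
  have key : Tendsto (fun p : ℝ × Evec n =>
      2 / p.1 ^ 2 * (f (xo + p.1 • p.2) - f xo) - D2 p.2 p.2) l (𝓝 0) := by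
    rw [NormedAddCommGroup.tendsto_nhds_zero]
    intro ε hε
    set M := ‖w‖ + 1 with hM
    have hM0 : 0 < M := by positivity
    have hMne : M ≠ 0 := ne_of_gt hM0
    have hc : 0 < ε / (4 * M ^ 2) := by positivity
    obtain ⟨δ, hδ0, hδ⟩ := quant _ hc
    have h1 : ∀ᶠ t in 𝓝[>] (0:ℝ), t ∈ Set.Ioo 0 (δ / M) :=
      Ioo_mem_nhdsGT_of_mem ⟨le_refl 0, by positivity⟩
    have h2 : ∀ᶠ w' in 𝓝 w, ‖w'‖ < M :=
      (continuous_norm.tendsto w).eventually_lt_const (by simp [hM])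
    filter_upwards [h1.prod_mk h2] with p hp
    obtain ⟨⟨ht0, htδ⟩, hw'⟩ := hp
    have htne : p.1 ≠ 0 := ne_of_gt ht0
    have hu : ‖p.1 • p.2‖ < δ := by
      rw [norm_smul, Real.norm_eq_abs, abs_of_pos ht0]
      have h4 : p.1 * M < δ := (lt_div_iff₀ hM0).mp htδ
      nlinarith [norm_nonneg p.2]
    have hb := hδ (p.1 • p.2) hu
    have hns : ‖p.1 • p.2‖ = p.1 * ‖p.2‖ := by
      rw [norm_smul, Real.norm_eq_abs, abs_of_pos ht0]
    have hD2s : D2 (p.1 • p.2) (p.1 • p.2) = p.1 ^ 2 * (D2 p.2 p.2) := by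
      simp only [map_smul, ContinuousLinearMap.smul_apply, smul_eq_mul]
      ring
    rw [hD2s] at hb
    have heq : 2 / p.1 ^ 2 * (f (xo + p.1 • p.2) - f xo) - D2 p.2 p.2
        = 2 / p.1 ^ 2 * (f (xo + p.1 • p.2) - f xo - p.1 ^ 2 * (D2 p.2 p.2) / 2) := by
      field_simp
    rw [heq, Real.norm_eq_abs, abs_mul, abs_of_pos (by positivity : (0:ℝ) < 2 / p.1 ^ 2)]
    have hb2 : |f (xo + p.1 • p.2) - f xo - p.1 ^ 2 * (D2 p.2 p.2) / 2|
        ≤ ε / (4 * M ^ 2) * (p.1 * ‖p.2‖) ^ 2 := by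
      have := hb
      rw [hns] at this
      exact this
    calc 2 / p.1 ^ 2 * |f (xo + p.1 • p.2) - f xo - p.1 ^ 2 * (D2 p.2 p.2) / 2|
        ≤ 2 / p.1 ^ 2 * (ε / (4 * M ^ 2) * (p.1 * ‖p.2‖) ^ 2) :=
          mul_le_mul_of_nonneg_left hb2 (by positivity)
      _ = ε / (2 * M ^ 2) * ‖p.2‖ ^ 2 := by field_simp; ring
      _ < ε := by
          have h5 : ‖p.2‖ ^ 2 ≤ M ^ 2 := by nlinarith [norm_nonneg p.2]
          have h6 : ε / (2 * M ^ 2) * ‖p.2‖ ^ 2 ≤ ε / (2 * M ^ 2) * M ^ 2 :=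
            mul_le_mul_of_nonneg_left h5 (by positivity)
          have h7 : ε / (2 * M ^ 2) * M ^ 2 = ε / 2 := by field_simp <;> ring
          linarith
  have h3 : Tendsto (fun p : ℝ × Evec n => D2 p.2 p.2) l (𝓝 (D2 w w)) :=
    ((D2.continuous.clm_apply continuous_id).tendsto w).comp tendsto_snd
  have h4 := key.add h3
  rw [zero_add] at h4
  exact h4.congr fun p => by ring

end AuxLemmas

set_option maxHeartbeats 1000000 in
/-- Lower estimate for the second subderivative of the essential objective of the ENLP. -/
theorem secondSubderiv_lower_estimate {n m : ℕ} (Y : Set (Evec m)) (hYne : Y.Nonempty) (hYpoly : IsPolyhedral Y)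
    (B : Evec m →L[ℝ] Evec m) (hBsym : ∀ u v : Evec m, ⟪B u, v⟫ = ⟪u, B v⟫)
    (hBpsd : ∀ u : Evec m, 0 ≤ ⟪u, B u⟫)
    (φ₀ : Evec n → ℝ) (hφ₀ : ContDiff ℝ 2 φ₀)
    (Φ : Evec n → Evec m) (hΦ : ContDiff ℝ 2 Φ)
    (xo : Evec n) (lmo : Evec m)
    (hkkt1 : gradient (fun x => Lag B φ₀ Φ x lmo) xo = 0)
    (hkkt2 : lmo ∈ subdiff (thetaY Y B) (Φ xo)) :
    ∀ w : Evec n,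
      ((⟪hessL B φ₀ Φ xo lmo w, w⟫ : ℝ) : EReal) +
          2 * thetaY (critCone Y B (Φ xo) lmo) B (fderiv ℝ Φ xo w) ≤
        secondSubderiv (enlpPhi Y B φ₀ Φ) xo 0 w := by
  intro w
  haveI : ((𝓝[>] (0:ℝ)) ×ˢ (𝓝 w)).NeBot :=
    Filter.NeBot.prod inferInstance inferInstance
  set fL : Evec n → ℝ := fun x => Lag B φ₀ Φ x lmo with hfL
  have hfC2 : ContDiff ℝ 2 fL := by
    rw [hfL]
    simp only [Lag]
    exact (hφ₀.add (hΦ.inner ℝ contDiff_const)).sub contDiff_const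
  have h0 : fderiv ℝ fL xo = 0 := by
    have h1 : eeIso n (fderiv ℝ fL xo) = 0 := hkkt1
    exact (eeIso n).map_eq_zero_iff.mp h1
  set D2 := fderiv ℝ (fderiv ℝ fL) xo with hD2
  have hhw : ⟪hessL B φ₀ Φ xo lmo w, w⟫ = D2 w w := by
    have h1 : hessL B φ₀ Φ xo lmo = fderiv ℝ (⇑(eeIso n) ∘ fderiv ℝ fL) xo := by
      simp only [hessL]
      rfl
    rw [h1, LinearIsometryEquiv.comp_fderiv]
    simp only [ContinuousLinearMap.coe_comp', Function.comp_apply,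
      LinearIsometryEquiv.coe_coe]
    exact InnerProductSpace.toDual_symm_apply
  have hθup : thetaY Y B (Φ xo) ≤ ((⟪lmo, Φ xo⟫ - 1 / 2 * ⟪lmo, B lmo⟫ : ℝ) : EReal) := by
    have h1 : thetaY Y B (B lmo) ≤ ((1 / 2 * ⟪lmo, B lmo⟫ : ℝ) : EReal) := by
      simp only [thetaY]
      refine iSup₂_le fun y hy => ?_
      rw [EReal.coe_le_coe_iff]
      have hp := hBpsd (y - lmo)
      have hyl : ⟪lmo, B y⟫ = ⟪y, B lmo⟫ := by rw [real_inner_comm, hBsym]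
      simp only [map_sub, inner_sub_left, inner_sub_right] at hp
      linarith
    have h2 := hkkt2 (B lmo)
    calc thetaY Y B (Φ xo)
        = thetaY Y B (Φ xo) + ((⟪lmo, B lmo - Φ xo⟫ : ℝ) : EReal)
            - ((⟪lmo, B lmo - Φ xo⟫ : ℝ) : EReal) := by rw [EReal.add_sub_cancel_right]
      _ ≤ ((1 / 2 * ⟪lmo, B lmo⟫ : ℝ) : EReal) - ((⟪lmo, B lmo - Φ xo⟫ : ℝ) : EReal) :=
          EReal.sub_le_sub (le_trans h2 h1) le_rfl
      _ = ((⟪lmo, Φ xo⟫ - 1 / 2 * ⟪lmo, B lmo⟫ : ℝ) : EReal) := by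
          rw [← EReal.coe_sub]
          congr 1
          rw [inner_sub_right]
          ring
  have hΦd : HasFDerivAt Φ (fderiv ℝ Φ xo) xo :=
    ((hΦ.differentiable (by norm_num)) xo).hasFDerivAt
  have key : ∀ κ ∈ critCone Y B (Φ xo) lmo,
      ((D2 w w + 2 * (⟪κ, fderiv ℝ Φ xo w⟫ - 1 / 2 * ⟪κ, B κ⟫) : ℝ) : EReal) ≤
        secondSubderiv (enlpPhi Y B φ₀ Φ) xo 0 w := by
    intro κ hκ
    obtain ⟨hκT, hortho⟩ := hκ
    rw [Set.mem_setOf_eq] at hortho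
    have hev := tangent_eventually hYpoly hκT
    have hT2 := tendsto_secondOrder hfC2 h0 w
    have hT1 := tendsto_firstOrder hΦd w
    have hT1' : Tendsto (fun p : ℝ × Evec n =>
        2 * ⟪κ, (p.1)⁻¹ • (Φ (xo + p.1 • p.2) - Φ xo)⟫) ((𝓝[>] (0:ℝ)) ×ˢ 𝓝 w)
        (𝓝 (2 * ⟪κ, fderiv ℝ Φ xo w⟫)) :=
      (Filter.Tendsto.inner tendsto_const_nhds hT1).const_mul 2
    have hG : Tendsto (fun p : ℝ × Evec n =>
        2 / p.1 ^ 2 * (fL (xo + p.1 • p.2) - fL xo)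
          + 2 * ⟪κ, (p.1)⁻¹ • (Φ (xo + p.1 • p.2) - Φ xo)⟫ - ⟪κ, B κ⟫)
        ((𝓝[>] (0:ℝ)) ×ˢ 𝓝 w) (𝓝 (D2 w w + 2 * ⟪κ, fderiv ℝ Φ xo w⟫ - ⟪κ, B κ⟫)) :=
      (hT2.add hT1').sub_const _
    have hbnd : ∀ᶠ p : ℝ × Evec n in (𝓝[>] (0:ℝ)) ×ˢ 𝓝 w,
        ((2 / p.1 ^ 2 * (fL (xo + p.1 • p.2) - fL xo)
            + 2 * ⟪κ, (p.1)⁻¹ • (Φ (xo + p.1 • p.2) - Φ xo)⟫ - ⟪κ, B κ⟫ : ℝ) : EReal) ≤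
          ((2 / p.1 ^ 2 : ℝ) : EReal) *
            (enlpPhi Y B φ₀ Φ (xo + p.1 • p.2) - enlpPhi Y B φ₀ Φ xo
              - ((p.1 * ⟪(0 : Evec n), p.2⟫ : ℝ) : EReal)) := by
      have hpos : ∀ᶠ t in 𝓝[>] (0:ℝ), 0 < t := self_mem_nhdsWithin
      filter_upwards [(hpos.and hev).prod_inl (𝓝 w)] with p hp
      obtain ⟨ht0, hYm⟩ := hp
      have htne : p.1 ≠ 0 := ne_of_gt ht0
      have hz0 : ⟪(0 : Evec n), p.2⟫ = 0 := inner_zero_left _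
      rw [hz0, mul_zero, EReal.coe_zero, sub_zero]
      have hstep1 : ((φ₀ (xo + p.1 • p.2) + (⟪lmo + p.1 • κ, Φ (xo + p.1 • p.2)⟫
          - 1 / 2 * ⟪lmo + p.1 • κ, B (lmo + p.1 • κ)⟫) : ℝ) : EReal)
          ≤ enlpPhi Y B φ₀ Φ (xo + p.1 • p.2) := by
        rw [EReal.coe_add]
        simp only [enlpPhi, thetaY]
        exact add_le_add_right (le_iSup₂ (f := fun y (_ : y ∈ Y) =>
          ((⟪y, Φ (xo + p.1 • p.2)⟫ - 1 / 2 * ⟪y, B y⟫ : ℝ) : EReal)) (lmo + p.1 • κ) hYm) _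
      have hstep2 : enlpPhi Y B φ₀ Φ xo
          ≤ ((φ₀ xo + (⟪lmo, Φ xo⟫ - 1 / 2 * ⟪lmo, B lmo⟫) : ℝ) : EReal) := by
        rw [EReal.coe_add]
        simp only [enlpPhi]
        exact add_le_add_right hθup _
      have halg : 2 / p.1 ^ 2 * (fL (xo + p.1 • p.2) - fL xo)
            + 2 * ⟪κ, (p.1)⁻¹ • (Φ (xo + p.1 • p.2) - Φ xo)⟫ - ⟪κ, B κ⟫
          = 2 / p.1 ^ 2 * ((φ₀ (xo + p.1 • p.2) + (⟪lmo + p.1 • κ, Φ (xo + p.1 • p.2)⟫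
              - 1 / 2 * ⟪lmo + p.1 • κ, B (lmo + p.1 • κ)⟫))
            - (φ₀ xo + (⟪lmo, Φ xo⟫ - 1 / 2 * ⟪lmo, B lmo⟫))) := by
        have hbk : ⟪κ, B lmo⟫ = ⟪κ, Φ xo⟫ := by
          have h3 : ⟪Φ xo, κ⟫ - ⟪B lmo, κ⟫ = 0 := by
            rw [← inner_sub_left]; exact hortho
          have h4 : ⟪Φ xo, κ⟫ = ⟪B lmo, κ⟫ := by linarith
          rw [real_inner_comm, ← h4, real_inner_comm]
        have hlb : ⟪lmo, B κ⟫ = ⟪κ, B lmo⟫ := by rw [real_inner_comm, hBsym]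
        have e1 : ⟪lmo + p.1 • κ, Φ (xo + p.1 • p.2)⟫
            = ⟪Φ (xo + p.1 • p.2), lmo⟫ + p.1 * ⟪κ, Φ (xo + p.1 • p.2)⟫ := by
          rw [inner_add_left, real_inner_smul_left, real_inner_comm]
        have e2 : ⟪lmo + p.1 • κ, B (lmo + p.1 • κ)⟫
            = ⟪lmo, B lmo⟫ + 2 * p.1 * ⟪κ, Φ xo⟫ + p.1 ^ 2 * ⟪κ, B κ⟫ := by
          rw [map_add, map_smul, inner_add_left, inner_add_right, inner_add_right,
            real_inner_smul_left, real_inner_smul_left, real_inner_smul_right,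
            real_inner_smul_right, hlb, hbk]
          ring
        have e3 : ⟪κ, (p.1)⁻¹ • (Φ (xo + p.1 • p.2) - Φ xo)⟫
            = (p.1)⁻¹ * (⟪κ, Φ (xo + p.1 • p.2)⟫ - ⟪κ, Φ xo⟫) := by
          rw [real_inner_smul_right, inner_sub_right]
        have e4 : ∀ x, fL x = φ₀ x + ⟪Φ x, lmo⟫ - 1 / 2 * ⟪lmo, B lmo⟫ := fun x => rfl
        rw [e1, e2, e3, show (⟪lmo, Φ xo⟫ : ℝ) = ⟪Φ xo, lmo⟫ from real_inner_comm _ _]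
        simp only [e4]
        field_simp
        ring
      calc ((2 / p.1 ^ 2 * (fL (xo + p.1 • p.2) - fL xo)
            + 2 * ⟪κ, (p.1)⁻¹ • (Φ (xo + p.1 • p.2) - Φ xo)⟫ - ⟪κ, B κ⟫ : ℝ) : EReal)
          = ((2 / p.1 ^ 2 : ℝ) : EReal) * (((φ₀ (xo + p.1 • p.2)
              + (⟪lmo + p.1 • κ, Φ (xo + p.1 • p.2)⟫
                - 1 / 2 * ⟪lmo + p.1 • κ, B (lmo + p.1 • κ)⟫) : ℝ) : EReal)
            - ((φ₀ xo + (⟪lmo, Φ xo⟫ - 1 / 2 * ⟪lmo, B lmo⟫) : ℝ) : EReal)) := by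
            rw [← EReal.coe_sub, ← EReal.coe_mul]
            exact congrArg _ halg
        _ ≤ ((2 / p.1 ^ 2 : ℝ) : EReal) *
            (enlpPhi Y B φ₀ Φ (xo + p.1 • p.2) - enlpPhi Y B φ₀ Φ xo) :=
          mul_le_mul_of_nonneg_left (EReal.sub_le_sub hstep1 hstep2)
            (EReal.coe_nonneg.mpr (by positivity))
    have hlim : Filter.liminf (fun p : ℝ × Evec n =>
        ((2 / p.1 ^ 2 * (fL (xo + p.1 • p.2) - fL xo)
          + 2 * ⟪κ, (p.1)⁻¹ • (Φ (xo + p.1 • p.2) - Φ xo)⟫ - ⟪κ, B κ⟫ : ℝ) : EReal))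
        ((𝓝[>] (0:ℝ)) ×ˢ 𝓝 w)
        = ((D2 w w + 2 * ⟪κ, fderiv ℝ Φ xo w⟫ - ⟪κ, B κ⟫ : ℝ) : EReal) :=
      (EReal.tendsto_coe.mpr hG).liminf_eq
    have hfinal := le_trans hlim.symm.le (Filter.liminf_le_liminf hbnd)
    have hcoe : ((D2 w w + 2 * (⟪κ, fderiv ℝ Φ xo w⟫ - 1 / 2 * ⟪κ, B κ⟫) : ℝ) : EReal)
        = ((D2 w w + 2 * ⟪κ, fderiv ℝ Φ xo w⟫ - ⟪κ, B κ⟫ : ℝ) : EReal) :=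
      congrArg _ (by ring)
    rw [hcoe]
    simpa only [secondSubderiv] using hfinal
  rcases Set.eq_empty_or_nonempty (critCone Y B (Φ xo) lmo) with hK | ⟨κ₀, hκ₀⟩
  · rw [hK]
    have hbot : thetaY (∅ : Set (Evec m)) B (fderiv ℝ Φ xo w) = ⊥ := by
      simp [thetaY]
    rw [hbot]
    have h2b : (2 : EReal) * (⊥ : EReal) = ⊥ :=
      EReal.mul_bot_of_pos (by norm_num)
    rw [h2b, EReal.add_bot]
    exact bot_le
  · rw [hhw]
    set S := thetaY (critCone Y B (Φ xo) lmo) B (fderiv ℝ Φ xo w) with hS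
    have hex : ∀ x : EReal, x < S → ∃ κ ∈ critCone Y B (Φ xo) lmo,
        x < ((⟪κ, fderiv ℝ Φ xo w⟫ - 1 / 2 * ⟪κ, B κ⟫ : ℝ) : EReal) := by
      intro x hx
      rw [hS] at hx
      simp only [thetaY] at hx
      rw [lt_iSup_iff] at hx
      obtain ⟨κ, hx⟩ := hx
      rw [lt_iSup_iff] at hx
      obtain ⟨hκK, hx⟩ := hx
      exact ⟨κ, hκK, hx⟩
    by_cases hTop : S = ⊤
    · rw [hTop]
      have h2t : (2 : EReal) * (⊤ : EReal) = ⊤ := by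
        rw [show (2 : EReal) = ((2 : ℝ) : EReal) from rfl]
        exact EReal.coe_mul_top_of_pos (by norm_num)
      rw [h2t, EReal.coe_add_top, top_le_iff, EReal.eq_top_iff_forall_lt]
      intro y
      have hy0 : (((y - D2 w w) / 2 : ℝ) : EReal) < S := by
        rw [hTop]; exact EReal.coe_lt_top _
      obtain ⟨κ, hκK, hy⟩ := hex _ hy0
      rw [EReal.coe_lt_coe_iff] at hy
      calc (y : EReal)
          < ((D2 w w + 2 * (⟪κ, fderiv ℝ Φ xo w⟫ - 1 / 2 * ⟪κ, B κ⟫) : ℝ) : EReal) := by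
            rw [EReal.coe_lt_coe_iff]; linarith
        _ ≤ _ := key κ hκK
    · have hbot' : (⊥ : EReal) < S :=
        lt_of_lt_of_le (EReal.bot_lt_coe _) (by
          rw [hS]; simp only [thetaY]
          exact le_iSup₂ (f := fun y (_ : y ∈ critCone Y B (Φ xo) lmo) =>
            ((⟪y, fderiv ℝ Φ xo w⟫ - 1 / 2 * ⟪y, B y⟫ : ℝ) : EReal)) κ₀ hκ₀)
      have hs : ((S.toReal : ℝ) : EReal) = S := EReal.coe_toReal hTop hbot'.ne'
      rw [← hs, show (2 : EReal) = ((2 : ℝ) : EReal) from rfl, ← EReal.coe_mul,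
        ← EReal.coe_add]
      by_contra hcon
      push_neg at hcon
      have hk0 := key κ₀ hκ₀
      have hRbot : (⊥ : EReal) < secondSubderiv (enlpPhi Y B φ₀ Φ) xo 0 w :=
        lt_of_lt_of_le (EReal.bot_lt_coe _) hk0
      have hRtop : secondSubderiv (enlpPhi Y B φ₀ Φ) xo 0 w ≠ ⊤ := hcon.ne_top
      have hρ : (((secondSubderiv (enlpPhi Y B φ₀ Φ) xo 0 w).toReal : ℝ) : EReal)
          = secondSubderiv (enlpPhi Y B φ₀ Φ) xo 0 w := EReal.coe_toReal hRtop hRbot.ne'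
      rw [← hρ, EReal.coe_lt_coe_iff] at hcon
      have hε0 : 0 < (D2 w w + 2 * S.toReal
          - (secondSubderiv (enlpPhi Y B φ₀ Φ) xo 0 w).toReal) / 4 := by linarith
      have hlt : ((S.toReal - (D2 w w + 2 * S.toReal
          - (secondSubderiv (enlpPhi Y B φ₀ Φ) xo 0 w).toReal) / 4 : ℝ) : EReal) < S :=
        lt_of_lt_of_eq (EReal.coe_lt_coe_iff.mpr (by linarith)) hs
      obtain ⟨κ, hκK, hlt2⟩ := hex _ hlt
      rw [EReal.coe_lt_coe_iff] at hlt2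
      have hk := key κ hκK
      rw [← hρ, EReal.coe_le_coe_iff] at hk
      linarith [hlt2, hk, hcon, hε0]
end
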